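/- arXiv:1306.5026 — 10 statements merged into one kernel-verified Lean document; each statement's English description precedes it below -/
import Mathlib

section
/- For every tree T on n ≥ 2 vertices, there exists a set S of vertices, all having the same degree in T, such that S is independent and |S| ≥ (n+2)/4. -/
open Finset SimpleGraph

section aux

variable {V : Type*} {T : SimpleGraph V}

/-- In a tree, adjacent vertices have distances from a fixed root of different parity. -/
lemma tree_adj_dist_parity [DecidableEq V] (hconn : T.Connected) (hacyc : T.IsAcyclic) (r : V) {u v : V}
    (h : T.Adj u v) : T.dist r u % 2 ≠ T.dist r v % 2 := by
  intro hpar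
  obtain ⟨p, hp, hpl⟩ := hconn.exists_path_of_dist r u
  obtain ⟨q, hq, hql⟩ := hconn.exists_path_of_dist r v
  -- distances differ by at most one, and have the same parity, so they are equal
  have h1 : T.dist r v ≤ T.dist r u + 1 := by
    have := hconn.dist_triangle (u := r) (v := u) (w := v)
    have := (T.dist_eq_one_iff_adj).mpr h
    omega
  have h2 : T.dist r u ≤ T.dist r v + 1 := by
    have := hconn.dist_triangle (u := r) (v := v) (w := u)
    have := (T.dist_eq_one_iff_adj).mpr h.symm
    omega
  have hk : T.dist r u = T.dist r v := by omega
  by_cases hv : v ∈ p.support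
  · -- the path to u passes through v; then the prefix equals q, so the suffix is trivial
    have hp1 : (p.takeUntil v hv).IsPath := hp.takeUntil hv
    have hEq : (⟨p.takeUntil v hv, hp1⟩ : T.Path r v) = ⟨q, hq⟩ :=
      hacyc.path_unique _ _
    have hlen : (p.takeUntil v hv).length = q.length := by
      rw [show p.takeUntil v hv = q from congrArg Subtype.val hEq]
    have hsplit := p.take_spec hv
    have : (p.takeUntil v hv).length + (p.dropUntil v hv).length = p.length := by
      rw [← SimpleGraph.Walk.length_append, hsplit]
    have hzero : (p.dropUntil v hv).length = 0 := by omega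
    have : v = u := SimpleGraph.Walk.eq_of_length_eq_zero hzero
    exact T.irrefl (this ▸ h)
  · -- otherwise appending the edge gives a second path from r to v, of different length
    have hpath : (SimpleGraph.Walk.cons h.symm p.reverse).IsPath := by
      rw [SimpleGraph.Walk.cons_isPath_iff]
      exact ⟨hp.reverse, by simpa using hv⟩
    have hEq : (⟨(SimpleGraph.Walk.cons h.symm p.reverse).reverse, hpath.reverse⟩ : T.Path r v)
        = ⟨q, hq⟩ := hacyc.path_unique _ _
    have hlen : (SimpleGraph.Walk.cons h.symm p.reverse).reverse.length = q.length := by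
      rw [show (SimpleGraph.Walk.cons h.symm p.reverse).reverse = q
        from congrArg Subtype.val hEq]
    simp only [SimpleGraph.Walk.length_reverse, SimpleGraph.Walk.length_cons] at hlen
    omega

/-- In a connected graph on at least two vertices every vertex has positive degree. -/
lemma degree_pos_of_connected [Fintype V] [DecidableRel T.Adj] (hconn : T.Connected)
    (hn : 2 ≤ Fintype.card V) (v : V) : 0 < T.degree v := by
  obtain ⟨w, hw⟩ := Fintype.exists_ne_of_one_lt_card (by omega) v
  obtain ⟨p⟩ := hconn.preconnected v w
  cases p with
  | nil => exact absurd rfl hw.symm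
  | cons h _ =>
    rw [T.degree_pos_iff_exists_adj]
    exact ⟨_, h⟩

/-- A vertex of degree one adjacent to `v` has no other neighbors. -/
lemma adj_eq_of_degree_one [Fintype V] [DecidableRel T.Adj] {u v b : V}
    (hd : T.degree u = 1) (hv : T.Adj u v) (hb : T.Adj u b) : b = v := by
  classical
  have hvm : v ∈ T.neighborFinset u := by rwa [T.mem_neighborFinset]
  have hbm : b ∈ T.neighborFinset u := by rwa [T.mem_neighborFinset]
  have : (T.neighborFinset u).card ≤ 1 := by rw [T.card_neighborFinset_eq_degree, hd]
  exact Finset.card_le_one.mp this b hbm v hvm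

/-- Walking from either endpoint of an edge between two leaves stays on that edge. -/
lemma walk_stuck [Fintype V] [DecidableRel T.Adj] {u v : V}
    (hu : T.degree u = 1) (hv : T.degree v = 1) (h : T.Adj u v) :
    ∀ {a w : V} (_ : T.Walk a w), a = u ∨ a = v → w = u ∨ w = v
  | _, _, SimpleGraph.Walk.nil, ha => ha
  | _, _, SimpleGraph.Walk.cons hab p, ha => by
      rcases ha with rfl | rfl
      · exact walk_stuck hu hv h p (Or.inr (adj_eq_of_degree_one hu h hab))
      · exact walk_stuck hu hv h p (Or.inl (adj_eq_of_degree_one hv h.symm hab))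

/-- In a connected graph on at least three vertices, two leaves cannot be adjacent. -/
lemma leaves_not_adj [Fintype V] [DecidableRel T.Adj] (hconn : T.Connected)
    (hn : 3 ≤ Fintype.card V) {u v : V} (hu : T.degree u = 1) (hv : T.degree v = 1) :
    ¬ T.Adj u v := by
  classical
  intro h
  have key : ∀ w : V, w = u ∨ w = v := by
    intro w
    obtain ⟨p⟩ := hconn.preconnected u w
    exact walk_stuck hu hv h p (Or.inl rfl)
  have : (Finset.univ : Finset V) ⊆ {u, v} := fun w _ => by
    rcases key w with rfl | rfl <;> simp
  have := Finset.card_le_card this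
  have h2 : ({u, v} : Finset V).card ≤ 2 := Finset.card_insert_le _ _ |>.trans (by simp)
  rw [Finset.card_univ] at this
  omega

end aux

/-- For every tree `T` on `n ≥ 2` vertices there is an independent set of vertices
all of the same degree of size at least `(n+2)/4`. -/
theorem regIndep_tree {V : Type*} [Fintype V] [DecidableEq V] (T : SimpleGraph V)
    [DecidableRel T.Adj] (hconn : T.Connected) (hacyc : T.IsAcyclic)
    (hn : 2 ≤ Fintype.card V) :
    ∃ S : Finset V, (∃ d : ℕ, ∀ v ∈ S, T.degree v = d) ∧
      (∀ u ∈ S, ∀ v ∈ S, ¬ T.Adj u v) ∧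
      ((Fintype.card V : ℝ) + 2) / 4 ≤ (S.card : ℝ) := by
  classical
  set n := Fintype.card V with hncard
  -- a sufficient condition, in ℕ, for the real inequality
  have final : ∀ S : Finset V, n + 2 ≤ 4 * S.card →
      ((Fintype.card V : ℝ) + 2) / 4 ≤ (S.card : ℝ) := by
    intro S hS
    rw [div_le_iff₀ (by norm_num)]
    have : ((n : ℝ) + 2) ≤ 4 * S.card := by exact_mod_cast hS
    linarith
  -- the case of exactly two vertices: a single vertex works
  rcases eq_or_lt_of_le hn with h2 | h3
  · obtain ⟨v⟩ : Nonempty V := Fintype.card_pos_iff.mp (by omega)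
    refine ⟨{v}, ⟨T.degree v, by simp⟩, ?_, ?_⟩
    · intro a ha b hb
      simp only [Finset.mem_singleton] at ha hb
      subst ha; subst hb
      exact T.irrefl
    · apply final
      simp [← h2]
  -- now `3 ≤ n`
  obtain ⟨r⟩ : Nonempty V := Fintype.card_pos_iff.mp (by omega)
  set A : Finset V := Finset.univ.filter (fun v => T.degree v = 1) with hA
  set B : Finset V := Finset.univ.filter (fun v => T.degree v = 2) with hB
  set C : Finset V := Finset.univ.filter (fun v => 3 ≤ T.degree v) with hC
  have hdegpos : ∀ v : V, 0 < T.degree v := degree_pos_of_connected hconn hn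
  -- cardinality partition
  have hpart : A.card + B.card + C.card = n := by
    have hU : A ∪ B ∪ C = Finset.univ := by
      ext v
      simp only [hA, hB, hC, Finset.mem_union, Finset.mem_filter, Finset.mem_univ, true_and,
        iff_true]
      have := hdegpos v
      omega
    have hAB : Disjoint A B := by
      rw [Finset.disjoint_left]
      intro v hv hv'
      simp only [hA, hB, Finset.mem_filter] at hv hv'
      omega
    have hABC : Disjoint (A ∪ B) C := by
      rw [Finset.disjoint_left]
      intro v hv hv'
      simp only [hA, hB, hC, Finset.mem_union, Finset.mem_filter] at hv hv'
      rcases hv with hv | hv <;> omega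
    rw [← Finset.card_union_of_disjoint hAB, ← Finset.card_union_of_disjoint hABC, hU,
      Finset.card_univ]
  -- degree sum identity for trees
  have hsum : ∑ v, T.degree v = 2 * (n - 1) := by
    have htree := (⟨hconn, hacyc⟩ : T.IsTree).card_edgeFinset
    rw [T.sum_degrees_eq_twice_card_edges]
    omega
  -- lower bound for the degree sum
  have hsum_lb : A.card + 2 * B.card + 3 * C.card ≤ 2 * (n - 1) := by
    rw [← hsum]
    have hU : A ∪ B ∪ C = Finset.univ := by
      ext v
      simp only [hA, hB, hC, Finset.mem_union, Finset.mem_filter, Finset.mem_univ, true_and,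
        iff_true]
      have := hdegpos v
      omega
    have hsplit : ∑ v, T.degree v = ∑ v ∈ A, T.degree v + ∑ v ∈ B, T.degree v
        + ∑ v ∈ C, T.degree v := by
      have hAB : Disjoint A B := by
        rw [Finset.disjoint_left]
        intro v hv hv'
        simp only [hA, hB, Finset.mem_filter] at hv hv'
        omega
      have hABC : Disjoint (A ∪ B) C := by
        rw [Finset.disjoint_left]
        intro v hv hv'
        simp only [hA, hB, hC, Finset.mem_union, Finset.mem_filter] at hv hv'
        rcases hv with hv | hv <;> omega
      rw [← Finset.sum_union hAB, ← Finset.sum_union hABC, hU]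
    rw [hsplit]
    have h1 : ∑ v ∈ A, T.degree v = A.card := by
      rw [Finset.sum_congr rfl (fun v hv => by
        simp only [hA, Finset.mem_filter] at hv; exact hv.2)]
      simp
    have h2 : ∑ v ∈ B, T.degree v = 2 * B.card := by
      rw [Finset.sum_congr rfl (fun v hv => by
        simp only [hB, Finset.mem_filter] at hv; exact hv.2)]
      simp [mul_comm]
    have h3 : 3 * C.card ≤ ∑ v ∈ C, T.degree v := by
      rw [mul_comm]
      exact Finset.card_nsmul_le_sum C _ 3 (fun v hv => by
        simp only [hC, Finset.mem_filter] at hv; exact hv.2)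
    omega
  -- the key counting inequality: n + 2 ≤ 2·|A| + |B|
  have hkey : n + 2 ≤ 2 * A.card + B.card := by omega
  by_cases hbig : n + 2 ≤ 4 * A.card
  · -- leaves form a large regular independent set
    refine ⟨A, ⟨1, fun v hv => by
      simp only [hA, Finset.mem_filter] at hv; exact hv.2⟩, ?_, final A hbig⟩
    intro u hu v hv
    simp only [hA, Finset.mem_filter] at hu hv
    exact leaves_not_adj hconn h3 hu.2 hv.2
  · -- otherwise take the larger parity class among degree-2 vertices
    set Bt : Finset V := B.filter (fun v => T.dist r v % 2 = 0) with hBt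
    set Bf : Finset V := B.filter (fun v => ¬ T.dist r v % 2 = 0) with hBf
    have hsplit : Bt.card + Bf.card = B.card := Finset.card_filter_add_card_filter_not _
    have hindep : ∀ S : Finset V, (S = Bt ∨ S = Bf) → ∀ u ∈ S, ∀ v ∈ S, ¬ T.Adj u v := by
      rintro S (rfl | rfl) u hu v hv hadj
      · simp only [hBt, Finset.mem_filter] at hu hv
        exact tree_adj_dist_parity hconn hacyc r hadj (hu.2.trans hv.2.symm)
      · simp only [hBf, Finset.mem_filter] at hu hv
        have hu2 := hu.2
        have hv2 := hv.2
        exact tree_adj_dist_parity hconn hacyc r hadj (by omega)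
    have hdeg : ∀ S : Finset V, (S = Bt ∨ S = Bf) → ∀ v ∈ S, T.degree v = 2 := by
      rintro S (rfl | rfl) v hv <;>
      · simp only [hBt, hBf, hB, Finset.mem_filter] at hv
        exact hv.1.2
    -- pick the larger class
    rcases le_total Bt.card Bf.card with hle | hle
    · refine ⟨Bf, ⟨2, hdeg Bf (Or.inr rfl)⟩, hindep Bf (Or.inr rfl), final Bf ?_⟩
      omega
    · refine ⟨Bt, ⟨2, hdeg Bt (Or.inl rfl)⟩, hindep Bt (Or.inl rfl), final Bt ?_⟩
      omega
end

section
/- For every tree T on n ≥ 2 vertices, there exists a set S of vertices, all having the same degree in T, such that the subgraph induced by S has maximum degree at most 1 and |S| ≥ 2(n+2)/7. -/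
open SimpleGraph Finset

/-- In a tree, any nonempty finset contains a vertex with at most one neighbor
inside the finset. -/
lemma tree_exists_low_deg {V : Type*} [Fintype V] [DecidableEq V] (T : SimpleGraph V)
    [DecidableRel T.Adj] (hconn : T.Connected) (hacyc : T.IsAcyclic)
    (A : Finset V) (hA : A.Nonempty) :
    ∃ v ∈ A, (A.filter (T.Adj v)).card ≤ 1 := by
  obtain ⟨r, -⟩ := id hA
  obtain ⟨v, hvA, hmax⟩ := A.exists_max_image (fun x => T.dist r x) hA
  refine ⟨v, hvA, Finset.card_le_one.mpr ?_⟩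
  -- fix a path from v to r
  have hreach : T.Reachable v r := hconn.preconnected v r
  let w0 : T.Walk v r := hreach.some
  have hp : (w0.bypass).IsPath := w0.bypass_isPath
  have key : ∀ u ∈ A.filter (T.Adj v), u = (w0.bypass).getVert 1 := by
    intro u hu
    rw [Finset.mem_filter] at hu
    obtain ⟨huA, hadj⟩ := hu
    have hdu : T.dist r u ≤ T.dist r v := hmax u huA
    obtain ⟨q, hq⟩ := (hconn.preconnected u r).exists_walk_length_eq_dist
    by_cases hvq : v ∈ q.support
    · exfalso
      have h1 : T.dist u v ≤ (q.takeUntil v hvq).length := SimpleGraph.dist_le _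
      have h2 : T.dist v r ≤ (q.dropUntil v hvq).length := SimpleGraph.dist_le _
      have h3 : (q.takeUntil v hvq).length + (q.dropUntil v hvq).length = q.length := by
        conv_rhs => rw [← q.take_spec hvq]
        rw [SimpleGraph.Walk.length_append]
      have hduv : T.dist u v = 1 := SimpleGraph.dist_eq_one_iff_adj.mpr hadj.symm
      have hc1 : T.dist u r = T.dist r u := SimpleGraph.dist_comm
      have hc2 : T.dist v r = T.dist r v := SimpleGraph.dist_comm
      omega
    · have hvq' : v ∉ q.bypass.support := fun h => hvq (q.support_bypass_subset h)
      have hp2 : (SimpleGraph.Walk.cons hadj q.bypass).IsPath :=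
        (q.bypass_isPath).cons hvq'
      have heq := hacyc.path_unique ⟨SimpleGraph.Walk.cons hadj q.bypass, hp2⟩ ⟨w0.bypass, hp⟩
      have heq' : SimpleGraph.Walk.cons hadj q.bypass = w0.bypass := congrArg Subtype.val heq
      calc u = (SimpleGraph.Walk.cons hadj q.bypass).getVert 1 :=
              (SimpleGraph.Walk.getVert_zero _).symm
        _ = (w0.bypass).getVert 1 := by rw [heq']
  intro a ha b hb
  rw [key a ha, key b hb]

/-- From any finset in a tree in which every vertex has at most two neighbors within
the finset, one can select a subset of relative size at least `2/3` inducing maximum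
degree at most one. -/
lemma tree_select_two_thirds {V : Type*} [Fintype V] [DecidableEq V] (T : SimpleGraph V)
    [DecidableRel T.Adj] (hconn : T.Connected) (hacyc : T.IsAcyclic) :
    ∀ (N : ℕ) (A : Finset V), A.card ≤ N → (∀ v ∈ A, (A.filter (T.Adj v)).card ≤ 2) →
      ∃ S, S ⊆ A ∧ (∀ v ∈ S, (S.filter (T.Adj v)).card ≤ 1) ∧ 2 * A.card ≤ 3 * S.card := by
  intro N
  induction N with
  | zero =>
    intro A hcard _
    refine ⟨∅, Finset.empty_subset _, by simp, ?_⟩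
    simp [Finset.card_eq_zero.mp (Nat.le_zero.mp hcard)]
  | succ N ih =>
    intro A hcard hdeg
    rcases A.eq_empty_or_nonempty with rfl | hA
    · exact ⟨∅, Finset.empty_subset _, by simp, by simp⟩
    obtain ⟨v, hvA, hvdeg⟩ := tree_exists_low_deg T hconn hacyc A hA
    interval_cases h : (A.filter (T.Adj v)).card
    · -- v has no neighbor in A
      have hfil : A.filter (T.Adj v) = ∅ := Finset.card_eq_zero.mp h
      set A' := A.erase v with hA'
      have hsubA' : A' ⊆ A := Finset.erase_subset _ _
      have hcard' : A'.card ≤ N := by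
        have h2 : A'.card + 1 = A.card := Finset.card_erase_add_one hvA
        omega
      have hdeg' : ∀ u ∈ A', (A'.filter (T.Adj u)).card ≤ 2 := by
        intro u hu
        exact le_trans (Finset.card_le_card
          (Finset.filter_subset_filter _ hsubA')) (hdeg u (hsubA' hu))
      obtain ⟨S', hS'sub, hS'ind, hS'card⟩ := ih A' hcard' hdeg'
      have hvS' : v ∉ S' := fun hv => Finset.notMem_erase v A (hS'sub hv)
      refine ⟨insert v S', ?_, ?_, ?_⟩
      · exact Finset.insert_subset hvA (hS'sub.trans hsubA')
      · intro u hu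
        have hnoadj : ∀ x ∈ A, ¬ T.Adj v x := by
          intro x hx hax
          have : x ∈ A.filter (T.Adj v) := Finset.mem_filter.mpr ⟨hx, hax⟩
          simp [hfil] at this
        rcases Finset.mem_insert.mp hu with rfl | hu'
        · have : (insert u S').filter (T.Adj u) = ∅ := by
            apply Finset.filter_false_of_mem
            intro x hx
            rcases Finset.mem_insert.mp hx with rfl | hx'
            · exact fun hax => (T.irrefl hax)
            · exact hnoadj x (hsubA' (hS'sub hx'))
          simp [this]
        · have hsub : (insert v S').filter (T.Adj u) ⊆ S'.filter (T.Adj u) := by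
            intro x hx
            rw [Finset.mem_filter] at hx ⊢
            rcases Finset.mem_insert.mp hx.1 with rfl | hx'
            · exact absurd hx.2.symm (hnoadj u (hsubA' (hS'sub hu')))
            · exact ⟨hx', hx.2⟩
          exact le_trans (Finset.card_le_card hsub) (hS'ind u hu')
      · have h1 : (insert v S').card = S'.card + 1 := Finset.card_insert_of_notMem hvS'
        have h2 : A'.card = A.card - 1 := Finset.card_erase_of_mem hvA
        have h3 : 1 ≤ A.card := Finset.card_pos.mpr hA
        omega
    · -- v has exactly one neighbor w in A
      obtain ⟨w, hw⟩ := Finset.card_eq_one.mp h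
      have hwmem : w ∈ A.filter (T.Adj v) := by rw [hw]; exact Finset.mem_singleton_self w
      rw [Finset.mem_filter] at hwmem
      obtain ⟨hwA, hadjvw⟩ := hwmem
      have hvw : v ≠ w := hadjvw.ne
      set R := insert w (A.filter (T.Adj w)) with hR
      set A' := A \ R with hA'
      have hvR : v ∈ R := by
        rw [hR]
        exact Finset.mem_insert_of_mem (Finset.mem_filter.mpr ⟨hvA, hadjvw.symm⟩)
      have hwR : w ∈ R := Finset.mem_insert_self _ _
      have hsubA' : A' ⊆ A := Finset.sdiff_subset
      have hwA' : w ∉ A' := fun hx => (Finset.mem_sdiff.mp hx).2 hwR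
      have hvA' : v ∉ A' := fun hx => (Finset.mem_sdiff.mp hx).2 hvR
      have hcard' : A'.card ≤ N := by
        have hsub : A' ⊆ A.erase w := by
          intro x hx
          rw [Finset.mem_erase]
          exact ⟨fun hxw => hwA' (hxw ▸ hx), hsubA' hx⟩
        have h1 := Finset.card_le_card hsub
        have h2 : (A.erase w).card + 1 = A.card := Finset.card_erase_add_one hwA
        omega
      have hRcard : R.card ≤ 3 := by
        have h1 : R.card ≤ (A.filter (T.Adj w)).card + 1 := Finset.card_insert_le _ _
        have h2 := hdeg w hwA
        omega
      have hA'card : A.card ≤ A'.card + 3 := by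
        have h0 : A'.card = (A \ R).card := by rw [hA']
        have h1 : (A \ R).card + R.card = (A ∪ R).card := Finset.card_sdiff_add_card A R
        have h2 : A.card ≤ (A ∪ R).card := Finset.card_le_card Finset.subset_union_left
        omega
      have hdeg' : ∀ u ∈ A', (A'.filter (T.Adj u)).card ≤ 2 := by
        intro u hu
        exact le_trans (Finset.card_le_card
          (Finset.filter_subset_filter _ hsubA')) (hdeg u (hsubA' hu))
      obtain ⟨S', hS'sub, hS'ind, hS'card⟩ := ih A' hcard' hdeg'
      have hvS' : v ∉ S' := fun hx => hvA' (hS'sub hx)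
      have hwS' : w ∉ S' := fun hx => hwA' (hS'sub hx)
      have hSsubA : insert v (insert w S') ⊆ A :=
        Finset.insert_subset hvA (Finset.insert_subset hwA (hS'sub.trans hsubA'))
      -- no vertex of A' is adjacent to v or w
      have hvnon : ∀ x ∈ A, T.Adj v x → x = w := by
        intro x hx hax
        have : x ∈ A.filter (T.Adj v) := Finset.mem_filter.mpr ⟨hx, hax⟩
        rw [hw] at this
        exact Finset.mem_singleton.mp this
      have hwnon : ∀ x ∈ A', ¬ T.Adj w x := by
        intro x hx hax
        exact (Finset.mem_sdiff.mp hx).2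
          (Finset.mem_insert_of_mem (Finset.mem_filter.mpr ⟨hsubA' hx, hax⟩))
      refine ⟨insert v (insert w S'), hSsubA, ?_, ?_⟩
      · intro u hu
        rcases Finset.mem_insert.mp hu with rfl | hu
        · -- u = v
          have hsub : (insert u (insert w S')).filter (T.Adj u) ⊆ {w} := by
            intro x hx
            rw [Finset.mem_filter] at hx
            rw [Finset.mem_singleton]
            exact hvnon x (hSsubA hx.1) hx.2
          exact le_trans (Finset.card_le_card hsub) (by simp)
        rcases Finset.mem_insert.mp hu with rfl | huS
        · -- u = w
          have hsub : (insert v (insert u S')).filter (T.Adj u) ⊆ {v} := by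
            intro x hx
            rw [Finset.mem_filter] at hx
            rw [Finset.mem_singleton]
            have hxS := hx.1
            rcases Finset.mem_insert.mp hxS with rfl | hxS
            · rfl
            rcases Finset.mem_insert.mp hxS with rfl | hxS
            · exact absurd hx.2 (T.irrefl)
            · exact absurd hx.2 (hwnon x (hS'sub hxS))
          exact le_trans (Finset.card_le_card hsub) (by simp)
        · -- u ∈ S'
          have hsub : (insert v (insert w S')).filter (T.Adj u) ⊆ S'.filter (T.Adj u) := by
            intro x hx
            rw [Finset.mem_filter] at hx ⊢
            have hxS := hx.1
            rcases Finset.mem_insert.mp hxS with rfl | hxS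
            · exfalso
              have := hvnon u (hsubA' (hS'sub huS)) hx.2.symm
              exact hwS' (this ▸ huS)
            rcases Finset.mem_insert.mp hxS with rfl | hxS
            · exact absurd hx.2.symm (hwnon u (hS'sub huS))
            · exact ⟨hxS, hx.2⟩
          exact le_trans (Finset.card_le_card hsub) (hS'ind u huS)
      · have hvins : v ∉ insert w S' := by
          rw [Finset.mem_insert]
          push_neg
          exact ⟨hvw, hvS'⟩
        have hc1 : (insert v (insert w S')).card = S'.card + 2 := by
          rw [Finset.card_insert_of_notMem hvins, Finset.card_insert_of_notMem hwS']
        omega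

/-- For every tree `T` on `n ≥ 2` vertices there is a set of vertices all of the same
degree, inducing a subgraph of maximum degree at most `1`, of size at least `2(n+2)/7`. -/
theorem reg1Indep_tree {V : Type*} [Fintype V] [DecidableEq V] (T : SimpleGraph V)
    [DecidableRel T.Adj] (hconn : T.Connected) (hacyc : T.IsAcyclic)
    (hn : 2 ≤ Fintype.card V) :
    ∃ S : Finset V, (∃ d : ℕ, ∀ v ∈ S, T.degree v = d) ∧
      (∀ v ∈ S, (S.filter (T.Adj v)).card ≤ 1) ∧
      2 * ((Fintype.card V : ℝ) + 2) / 7 ≤ (S.card : ℝ) := by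
  classical
  set n := Fintype.card V with hndef
  set D1 := Finset.univ.filter (fun v => T.degree v = 1) with hD1
  set D2 := Finset.univ.filter (fun v => T.degree v = 2) with hD2
  -- every vertex has positive degree
  have hdegpos : ∀ v : V, 1 ≤ T.degree v := by
    intro v
    obtain ⟨u, hu⟩ := Fintype.exists_ne_of_one_lt_card (by omega) v
    have hreach : T.Reachable v u := hconn.preconnected v u
    obtain ⟨p⟩ := hreach
    cases p with
    | nil => exact absurd rfl hu.symm
    | cons h _ => exact T.degree_pos_iff_exists_adj v |>.mpr ⟨_, h⟩
  -- handshake: sum of degrees = 2(n-1)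
  have htree : T.IsTree := ⟨hconn, hacyc⟩
  have hedges : T.edgeFinset.card + 1 = n := htree.card_edgeFinset
  have hsum : ∑ v, T.degree v = 2 * T.edgeFinset.card :=
    T.sum_degrees_eq_twice_card_edges
  -- the key counting inequality: n + 2 ≤ 2 * D1.card + D2.card
  have hkey : n + 2 ≤ 2 * D1.card + D2.card := by
    have hptwise : ∀ v : V, 3 ≤ T.degree v + ((if T.degree v = 1 then 2 else 0)
        + (if T.degree v = 2 then 1 else 0)) := by
      intro v
      have := hdegpos v
      split_ifs <;> omega
    have hsum3 : (3 * n : ℕ) ≤ ∑ v, (T.degree v + ((if T.degree v = 1 then 2 else 0)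
        + (if T.degree v = 2 then 1 else 0))) := by
      calc (3 * n : ℕ) = ∑ _v : V, 3 := by simp [hndef, mul_comm]
        _ ≤ _ := Finset.sum_le_sum (fun v _ => hptwise v)
    rw [Finset.sum_add_distrib, Finset.sum_add_distrib] at hsum3
    have e1 : ∑ v : V, (if T.degree v = 1 then (2:ℕ) else 0) = 2 * D1.card := by
      rw [hD1, Finset.card_filter, Finset.mul_sum]
      simp [mul_ite]
    have e2 : ∑ v : V, (if T.degree v = 2 then (1:ℕ) else 0) = D2.card := by
      rw [hD2, Finset.card_filter]
    rw [hsum, e1, e2] at hsum3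
    omega
  -- candidate 2 : a 1-independent subset of the degree-2 vertices
  have hD2deg : ∀ v ∈ D2, (D2.filter (T.Adj v)).card ≤ 2 := by
    intro v hv
    have hsub : D2.filter (T.Adj v) ⊆ T.neighborFinset v := by
      intro x hx
      rw [Finset.mem_filter] at hx
      rw [SimpleGraph.mem_neighborFinset]
      exact hx.2
    calc (D2.filter (T.Adj v)).card ≤ (T.neighborFinset v).card :=
          Finset.card_le_card hsub
      _ = T.degree v := T.card_neighborFinset_eq_degree v
      _ = 2 := (Finset.mem_filter.mp hv).2
  obtain ⟨S2, hS2sub, hS2ind, hS2card⟩ :=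
    tree_select_two_thirds T hconn hacyc D2.card D2 le_rfl hD2deg
  by_cases hc : 2 * ((n : ℝ) + 2) / 7 ≤ (D1.card : ℝ)
  · -- take the leaves
    refine ⟨D1, ⟨1, fun v hv => (Finset.mem_filter.mp hv).2⟩, ?_, hc⟩
    intro v hv
    have hsub : D1.filter (T.Adj v) ⊆ T.neighborFinset v := by
      intro x hx
      rw [Finset.mem_filter] at hx
      rw [SimpleGraph.mem_neighborFinset]
      exact hx.2
    calc (D1.filter (T.Adj v)).card ≤ (T.neighborFinset v).card :=
          Finset.card_le_card hsub
      _ = T.degree v := T.card_neighborFinset_eq_degree v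
      _ = 1 := (Finset.mem_filter.mp hv).2
  · refine ⟨S2, ⟨2, fun v hv => (Finset.mem_filter.mp (hS2sub hv)).2⟩, hS2ind, ?_⟩
    push_neg at hc
    have c1 : ((n : ℝ) + 2) ≤ 2 * (D1.card : ℝ) + (D2.card : ℝ) := by
      exact_mod_cast hkey
    have c2 : 2 * (D2.card : ℝ) ≤ 3 * (S2.card : ℝ) := by
      exact_mod_cast hS2card
    linarith
end

section
/- For every tree T on n ≥ 2 vertices and every integer k ≥ 2, there exists a set S of vertices, all of the same degree in T, such that the subgraph induced by S has maximum degree at most k and |S| ≥ (n+2)/3. -/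
/-- For every tree `T` on `n ≥ 2` vertices and every `k ≥ 2` there is a set of vertices
all of the same degree, inducing a subgraph of maximum degree at most `k`, of size
at least `(n+2)/3`. -/
theorem regKIndep_tree {V : Type*} [Fintype V] [DecidableEq V] (T : SimpleGraph V)
    [DecidableRel T.Adj] (hconn : T.Connected) (hacyc : T.IsAcyclic)
    (hn : 2 ≤ Fintype.card V) (k : ℕ) (hk : 2 ≤ k) :
    ∃ S : Finset V, (∃ d : ℕ, ∀ v ∈ S, T.degree v = d) ∧
      (∀ v ∈ S, (S.filter (T.Adj v)).card ≤ k) ∧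
      ((Fintype.card V : ℝ) + 2) / 3 ≤ (S.card : ℝ) := by
  classical
  set n := Fintype.card V with hncard
  -- every vertex has positive degree
  have hdeg1 : ∀ v : V, 1 ≤ T.degree v := by
    intro v
    rw [Nat.one_le_iff_ne_zero, ← Nat.pos_iff_ne_zero, T.degree_pos_iff_exists_adj v]
    obtain ⟨w, hw⟩ := Fintype.exists_ne_of_one_lt_card hn v
    obtain ⟨p⟩ := hconn v w
    cases p with
    | nil => exact absurd rfl hw
    | cons h q => exact ⟨_, h⟩
  -- degree sum formula
  have htree : T.IsTree := ⟨hconn, hacyc⟩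
  have hsum : ∑ v, T.degree v = 2 * (n - 1) := by
    rw [T.sum_degrees_eq_twice_card_edges]
    have := htree.card_edgeFinset
    omega
  set A := Finset.univ.filter (fun v => T.degree v = 1) with hA
  set B := Finset.univ.filter (fun v => T.degree v = 2) with hB
  set C := Finset.univ.filter (fun v => 2 < T.degree v) with hC
  have hpart : A.card + B.card + C.card = n := by
    rw [hncard, ← Finset.card_univ]
    rw [← Finset.card_union_of_disjoint, ← Finset.card_union_of_disjoint]
    · congr 1
      ext v
      simp only [hA, hB, hC, Finset.mem_union, Finset.mem_filter, Finset.mem_univ,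
        true_and]
      constructor
      · intro _; trivial
      · intro _
        have := hdeg1 v
        omega
    · simp only [hA, hB, hC, Finset.disjoint_left, Finset.mem_union, Finset.mem_filter,
        Finset.mem_univ, true_and]
      intro v hv hv2
      omega
    · simp only [hA, hB, Finset.disjoint_left, Finset.mem_filter, Finset.mem_univ, true_and]
      intro v hv hv2
      omega
  have hsumge : A.card + 2 * B.card + 3 * C.card ≤ 2 * (n - 1) := by
    rw [← hsum]
    have : ∑ v, T.degree v = ∑ v ∈ A, T.degree v + ∑ v ∈ B, T.degree v
        + ∑ v ∈ C, T.degree v := by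
      rw [hA, hB, hC, add_assoc]
      rw [← Finset.sum_filter_add_sum_filter_not Finset.univ (fun v => T.degree v = 1)]
      congr 1
      rw [← Finset.sum_filter_add_sum_filter_not
        (Finset.univ.filter (fun v => ¬ T.degree v = 1)) (fun v => T.degree v = 2)]
      congr 1
      · apply Finset.sum_congr _ (fun _ _ => rfl)
        ext v
        simp only [Finset.mem_filter, Finset.mem_univ, true_and]
        omega
      · apply Finset.sum_congr _ (fun _ _ => rfl)
        ext v
        simp only [Finset.mem_filter, Finset.mem_univ, true_and]
        have := hdeg1 v
        omega
    rw [this]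
    have h1 : ∑ v ∈ A, T.degree v = A.card := by
      rw [Finset.sum_congr rfl (fun v hv => by
        simp only [hA, Finset.mem_filter] at hv; exact hv.2)]
      simp
    have h2 : ∑ v ∈ B, T.degree v = 2 * B.card := by
      rw [Finset.sum_congr rfl (fun v hv => by
        simp only [hB, Finset.mem_filter] at hv; exact hv.2)]
      simp [mul_comm]
    have h3 : 3 * C.card ≤ ∑ v ∈ C, T.degree v := by
      have := Finset.card_nsmul_le_sum C (fun v => T.degree v) 3 (fun v hv => by
        simp only [hC, Finset.mem_filter] at hv
        exact hv.2)
      simpa [smul_eq_mul, mul_comm] using this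
    omega
  have hn1 : 1 ≤ n := by omega
  -- 2|A| + |B| ≥ n + 2
  have hkey : n + 2 ≤ 2 * A.card + B.card := by omega
  -- choose the bigger of A, B
  have hmax : ∃ S : Finset V, (∃ d : ℕ, ∀ v ∈ S, T.degree v = d) ∧
      (∀ v ∈ S, T.degree v ≤ 2) ∧ n + 2 ≤ 3 * S.card := by
    rcases le_total A.card B.card with h | h
    · exact ⟨B, ⟨2, fun v hv => by
        simpa [hB, Finset.mem_filter] using hv⟩,
        fun v hv => by
          simp only [hB, Finset.mem_filter] at hv; omega,
        by omega⟩
    · exact ⟨A, ⟨1, fun v hv => by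
        simpa [hA, Finset.mem_filter] using hv⟩,
        fun v hv => by
          simp only [hA, Finset.mem_filter] at hv; omega,
        by omega⟩
  obtain ⟨S, hd, hdle, hcard⟩ := hmax
  refine ⟨S, hd, ?_, ?_⟩
  · intro v hv
    have hsub : S.filter (T.Adj v) ⊆ T.neighborFinset v := by
      intro w hw
      rw [SimpleGraph.mem_neighborFinset]
      exact (Finset.mem_filter.mp hw).2
    calc (S.filter (T.Adj v)).card ≤ (T.neighborFinset v).card := Finset.card_le_card hsub
      _ = T.degree v := rfl
      _ ≤ 2 := hdle v hv
      _ ≤ k := hk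
  · rw [div_le_iff₀ (by norm_num)]
    have : (n : ℝ) + 2 ≤ 3 * S.card := by exact_mod_cast hcard
    linarith
end

section
/- For every forest F on n vertices with n ≥ 3, there exists an independent set of vertices all having the same degree in F of size at least (n+2)/5. -/
open SimpleGraph Finset


lemma acyclic_anti {V : Type*} {G H : SimpleGraph V} (h : G ≤ H) (hH : H.IsAcyclic) :
    G.IsAcyclic := fun _ c hc => hH (c.mapLe h) (hc.mapLe h)

lemma master {V : Type*} [Fintype V] [DecidableEq V] :
    ∀ (k : ℕ) (G : SimpleGraph V), G.IsAcyclic → G.edgeSet.ncard = k →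
    ∀ (C : Finset V), (∀ x ∈ C, ∀ y ∈ C, x ≠ y → ¬ G.Reachable x y) →
    G.edgeSet.ncard + C.card ≤ Fintype.card V := by
  intro k
  induction k using Nat.strong_induction_on with
  | _ k ih =>
    intro G hG hk C hC
    rcases Set.eq_empty_or_nonempty G.edgeSet with he | he
    · rw [he]; simpa using C.card_le_univ
    · obtain ⟨e, he⟩ := he
      induction e using Sym2.ind with
      | _ x y =>
        have hadj : G.Adj x y := he
        have hbr := (isAcyclic_iff_forall_adj_isBridge.mp hG) hadj
        rw [isBridge_iff] at hbr
        set G' : SimpleGraph V := G \ fromEdgeSet {s(x,y)} with hG'def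
        have hle : G' ≤ G := sdiff_le
        have hG'ac : G'.IsAcyclic := acyclic_anti hle hG
        have hfin : G.edgeSet.Finite := Set.toFinite _
        have hES : G'.edgeSet = G.edgeSet \ {s(x,y)} := by
          rw [hG'def, edgeSet_sdiff, edgeSet_fromEdgeSet]
          ext e
          simp only [Set.mem_diff, Set.mem_singleton_iff, Set.mem_setOf_eq, not_and, not_not]
          constructor
          · rintro ⟨h1, h2⟩
            refine ⟨h1, fun h => ?_⟩
            subst h
            exact hadj.ne (Sym2.mk_isDiag_iff.mp (h2 rfl))
          · rintro ⟨h1, h2⟩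
            exact ⟨h1, fun h => absurd h h2⟩
        have hcard : G'.edgeSet.ncard + 1 = G.edgeSet.ncard := by
          rw [hES]; exact Set.ncard_diff_singleton_add_one he hfin
        -- choose marker
        have hmark : ∃ z, (z = x ∨ z = y) ∧ z ∉ C ∧ ∀ c ∈ C, ¬ G'.Reachable z c := by
          by_cases hx : ∀ c ∈ C, ¬ G'.Reachable x c
          · refine ⟨x, Or.inl rfl, fun hxC => hx x hxC (Reachable.refl x), hx⟩
          · push_neg at hx
            obtain ⟨c, hcC, hcr⟩ := hx
            have hy : ∀ c' ∈ C, ¬ G'.Reachable y c' := by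
              intro c' hc' hyr
              rcases eq_or_ne c c' with rfl | hne
              · exact hbr (hcr.trans hyr.symm)
              · exact hC c hcC c' hc' hne
                  ((hcr.mono hle).symm.trans ((hadj.reachable).trans (hyr.mono hle)))
            exact ⟨y, Or.inr rfl, fun hyC => hy y hyC (Reachable.refl y), hy⟩
        obtain ⟨z, _, hzC, hz⟩ := hmark
        have hC' : ∀ a ∈ insert z C, ∀ b ∈ insert z C, a ≠ b → ¬ G'.Reachable a b := by
          intro a ha b hb hab h
          rcases Finset.mem_insert.mp ha with ha' | ha' <;>
            rcases Finset.mem_insert.mp hb with hb' | hb'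
          · exact hab (ha'.trans hb'.symm)
          · exact hz b hb' (ha' ▸ h)
          · exact hz a ha' (hb' ▸ h.symm)
          · exact hC a ha' b hb' hab (h.mono hle)
        have := ih (k - 1) (by omega) G' hG'ac (by omega) (insert z C) hC'
        rw [Finset.card_insert_of_notMem hzC] at this
        omega





lemma reach_isolated {V : Type*} {G : SimpleGraph V} {a u : V}
    (h : ∀ b, ¬ G.Adj a b) (hr : G.Reachable a u) : u = a := by
  obtain ⟨p⟩ := hr
  cases p with
  | nil => rfl
  | cons hadj q => exact absurd hadj (h _)

lemma reach_pair {V : Type*} {G : SimpleGraph V} {u v z : V}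
    (hv : ∀ w, G.Adj v w → w = u) (hu : ∀ w, G.Adj u w → w = v)
    (hr : G.Reachable v z) : z = v ∨ z = u := by
  have key : ∀ (x z : V) (p : G.Walk x z), (x = v ∨ x = u) → (z = v ∨ z = u) := by
    intro x z p
    induction p with
    | nil => exact id
    | cons hadj q ih =>
      rintro (rfl | rfl)
      · exact ih (Or.inr (hv _ hadj))
      · exact ih (Or.inl (hu _ hadj))
  obtain ⟨p⟩ := hr
  exact key v z p (Or.inl rfl)

def restrictG {V : Type*} (G : SimpleGraph V) (W : Finset V) : SimpleGraph V where
  Adj a b := G.Adj a b ∧ a ∈ W ∧ b ∈ W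
  symm := ⟨fun a b h => ⟨h.1.symm, h.2.2, h.2.1⟩⟩
  loopless := ⟨fun a h => G.irrefl h.1⟩

instance {V : Type*} [DecidableEq V] (G : SimpleGraph V) [DecidableRel G.Adj] (W : Finset V) :
    DecidableRel (restrictG G W).Adj := fun _ _ => instDecidableAnd

lemma restrictG_adj {V : Type*} (G : SimpleGraph V) (W : Finset V) (a b : V) :
    (restrictG G W).Adj a b ↔ G.Adj a b ∧ a ∈ W ∧ b ∈ W := Iff.rfl

lemma half_indep {V : Type*} [Fintype V] [DecidableEq V] (G : SimpleGraph V) [DecidableRel G.Adj]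
    (hG : G.IsAcyclic) :
    ∀ (k : ℕ) (W : Finset V), W.card = k →
    ∃ S : Finset V, S ⊆ W ∧ (∀ u ∈ S, ∀ v ∈ S, ¬ G.Adj u v) ∧ W.card ≤ 2 * S.card := by
  intro k
  induction k using Nat.strong_induction_on with
  | _ k ih =>
  intro W hWk
  rcases W.eq_empty_or_nonempty with rfl | ⟨w0, hw0⟩
  · exact ⟨∅, by simp⟩
  set GW : SimpleGraph V := restrictG G W with hGWdef
  have hle : GW ≤ G := fun a b h => h.1
  have hGWac := acyclic_anti hle hG
  have hiso : ∀ a ∈ Wᶜ, ∀ b, ¬ GW.Adj a b := fun a ha b hab =>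
    (Finset.mem_compl.mp ha) hab.2.1
  have hCmark : ∀ x ∈ insert w0 Wᶜ, ∀ y ∈ insert w0 Wᶜ, x ≠ y → ¬ GW.Reachable x y := by
    intro x hx y hy hxy hr
    rcases Finset.mem_insert.mp hy with rfl | hy'
    · rcases Finset.mem_insert.mp hx with rfl | hx'
      · exact hxy rfl
      · exact hxy (reach_isolated (hiso x hx') hr).symm
    · exact hxy (reach_isolated (hiso y hy') hr.symm)
  have hw0c : w0 ∉ Wᶜ := by simp [hw0]
  have hml := master _ GW hGWac rfl (insert w0 Wᶜ) hCmark
  rw [Finset.card_insert_of_notMem hw0c, Finset.card_compl] at hml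
  have hhs : ∑ v, GW.degree v = 2 * GW.edgeFinset.card := GW.sum_degrees_eq_twice_card_edges
  have hncard : GW.edgeSet.ncard = GW.edgeFinset.card := Set.ncard_eq_toFinset_card' _
  have hWle : W.card ≤ Fintype.card V := W.card_le_univ
  have hexists : ∃ v ∈ W, GW.degree v ≤ 1 := by
    by_contra hcon
    push_neg at hcon
    have h1 : 2 * W.card ≤ ∑ v ∈ W, GW.degree v := by
      calc 2 * W.card = ∑ _v ∈ W, 2 := by rw [Finset.sum_const]; ring
      _ ≤ _ := Finset.sum_le_sum (fun v hv => hcon v hv)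
    have h2 : ∑ v ∈ W, GW.degree v ≤ ∑ v, GW.degree v :=
      Finset.sum_le_sum_of_subset (W.subset_univ)
    have h3 : 0 < W.card := Finset.card_pos.mpr ⟨w0, hw0⟩
    omega
  obtain ⟨v, hvW, hdeg⟩ := hexists
  set W' := W \ insert v (GW.neighborFinset v) with hW'
  have hsub : W' ⊆ W := Finset.sdiff_subset
  have hvW' : v ∉ W' := by simp [hW']
  have hcardW' : W'.card < k := by
    have : W'.card < W.card := Finset.card_lt_card ⟨hsub, fun hsup => (hvW' (hsup hvW))⟩
    omega
  have hcard2 : W.card ≤ W'.card + 2 := by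
    have h1 : W.card - (insert v (GW.neighborFinset v)).card ≤ W'.card :=
      Finset.le_card_sdiff _ _
    have h2 : (insert v (GW.neighborFinset v)).card ≤ 2 := by
      calc (insert v (GW.neighborFinset v)).card ≤ (GW.neighborFinset v).card + 1 :=
            Finset.card_insert_le _ _
      _ ≤ 2 := by rw [GW.card_neighborFinset_eq_degree]; omega
    omega
  obtain ⟨S', hS'sub, hS'ind, hS'card⟩ := ih W'.card hcardW' W' rfl
  have hvS' : v ∉ S' := fun h => hvW' (hS'sub h)
  refine ⟨insert v S', ?_, ?_, ?_⟩
  · intro a ha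
    rcases Finset.mem_insert.mp ha with rfl | ha'
    · exact hvW
    · exact hsub (hS'sub ha')
  · have hnadj : ∀ u ∈ S', ¬ G.Adj v u := by
      intro u hu hadj
      have huW : u ∈ W := hsub (hS'sub hu)
      have h1 : GW.Adj v u := ⟨hadj, hvW, huW⟩
      have h2 : u ∈ insert v (GW.neighborFinset v) :=
        Finset.mem_insert_of_mem ((GW.mem_neighborFinset v u).mpr h1)
      exact (Finset.mem_sdiff.mp (hS'sub hu)).2 h2
    intro a ha b hb hab
    rcases Finset.mem_insert.mp ha with rfl | ha' <;> rcases Finset.mem_insert.mp hb with rfl | hb'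
    · exact G.loopless.irrefl _ hab
    · exact hnadj b hb' hab
    · exact hnadj a ha' hab.symm
    · exact hS'ind a ha' b hb' hab
  · rw [Finset.card_insert_of_notMem hvS']
    omega

noncomputable def nbrF {V : Type*} [Fintype V] (F : SimpleGraph V) [DecidableRel F.Adj]
    (v : V) : V :=
  if h : 0 < (F.neighborFinset v).card then (Finset.card_pos.mp h).choose else v

lemma nbrF_adj {V : Type*} [Fintype V] (F : SimpleGraph V) [DecidableRel F.Adj] {v : V}
    (h : 0 < F.degree v) : F.Adj v (nbrF F v) := by
  rw [← F.card_neighborFinset_eq_degree] at h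
  rw [nbrF, dif_pos h]
  exact (F.mem_neighborFinset v _).mp (Finset.card_pos.mp h).choose_spec

lemma nbrF_uniq {V : Type*} [Fintype V] (F : SimpleGraph V) [DecidableRel F.Adj] {v w : V}
    (h : F.degree v = 1) (hw : F.Adj v w) : w = nbrF F v := by
  have h1 : 0 < F.degree v := by omega
  have h2 := nbrF_adj F h1
  have hc : (F.neighborFinset v).card ≤ 1 := by
    rw [F.card_neighborFinset_eq_degree, h]
  exact Finset.card_le_one.mp hc w ((F.mem_neighborFinset v w).mpr hw) _
    ((F.mem_neighborFinset v _).mpr h2)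

lemma finishR (n c : ℕ) (h : n + 2 ≤ 5 * c) : ((n : ℝ) + 2) / 5 ≤ (c : ℝ) := by
  rw [div_le_iff₀ (by norm_num)]
  have h' : ((n + 2 : ℕ) : ℝ) ≤ ((5 * c : ℕ) : ℝ) := Nat.cast_le.mpr h
  push_cast at h'
  linarith

/-- For every forest `F` on `n ≥ 3` vertices there is an independent set of vertices
all of the same degree of size at least `(n+2)/5`. -/
theorem regIndep_forest {V : Type*} [Fintype V] [DecidableEq V] (F : SimpleGraph V)
    [DecidableRel F.Adj] (hacyc : F.IsAcyclic) (hn : 3 ≤ Fintype.card V) :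
    ∃ S : Finset V, (∃ d : ℕ, ∀ v ∈ S, F.degree v = d) ∧
      (∀ u ∈ S, ∀ v ∈ S, ¬ F.Adj u v) ∧
      ((Fintype.card V : ℝ) + 2) / 5 ≤ (S.card : ℝ) := by
  classical
  set n := Fintype.card V with hndef
  set nbr := nbrF F with hnbrdef
  set ord : V → ℕ := fun v => (Fintype.equivFin V v : ℕ) with horddef
  have hordinj : ∀ u v : V, ord u = ord v → u = v := by
    intro u v h
    exact (Fintype.equivFin V).injective (Fin.val_injective h)
  set D0 := univ.filter (fun v => F.degree v = 0) with hD0def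
  set A := univ.filter (fun v => F.degree v = 1) with hAdef
  set B := univ.filter (fun v => F.degree v = 2) with hBdef
  set Mst := univ.filter (fun v => 3 ≤ F.degree v) with hMdef
  -- partition
  have hpart : D0.card + A.card + B.card + Mst.card = n := by
    have h1 : D0 ∪ (A ∪ (B ∪ Mst)) = univ := by
      ext v
      simp only [hD0def, hAdef, hBdef, hMdef, Finset.mem_union, Finset.mem_filter,
        Finset.mem_univ, true_and, iff_true]
      omega
    have d1 : Disjoint D0 (A ∪ (B ∪ Mst)) := by
      rw [Finset.disjoint_left]
      intro v hv hv'
      simp only [hD0def, hAdef, hBdef, hMdef, Finset.mem_union, Finset.mem_filter,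
        Finset.mem_univ, true_and] at hv hv'
      omega
    have d2 : Disjoint A (B ∪ Mst) := by
      rw [Finset.disjoint_left]
      intro v hv hv'
      simp only [hAdef, hBdef, hMdef, Finset.mem_union, Finset.mem_filter,
        Finset.mem_univ, true_and] at hv hv'
      omega
    have d3 : Disjoint B Mst := by
      rw [Finset.disjoint_left]
      intro v hv hv'
      simp only [hBdef, hMdef, Finset.mem_filter, Finset.mem_univ, true_and] at hv hv'
      omega
    rw [hndef, ← Finset.card_univ, ← h1, Finset.card_union_of_disjoint d1,
      Finset.card_union_of_disjoint d2, Finset.card_union_of_disjoint d3]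
    omega
  -- Q, R, R'
  set Q := A.filter (fun v => F.degree (nbr v) = 1) with hQdef
  set R := Q.filter (fun v => ord (nbr v) < ord v) with hRdef
  set R' := Q.filter (fun v => ord v < ord (nbr v)) with hR'def
  have hQA : Q ⊆ A := Finset.filter_subset _ _
  have hRQ : R ⊆ Q := Finset.filter_subset _ _
  have hR'Q : R' ⊆ Q := Finset.filter_subset _ _
  have hAdeg : ∀ v ∈ A, F.degree v = 1 := by
    intro v hv; rw [hAdef] at hv; exact (Finset.mem_filter.mp hv).2
  have hQdeg : ∀ v ∈ Q, F.degree v = 1 ∧ F.degree (nbr v) = 1 := by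
    intro v hv
    rw [hQdef] at hv
    exact ⟨hAdeg v (Finset.mem_filter.mp hv).1, (Finset.mem_filter.mp hv).2⟩
  have hQnn : ∀ v ∈ Q, nbr (nbr v) = v := by
    intro v hv
    obtain ⟨h1, h2⟩ := hQdeg v hv
    exact (nbrF_uniq F h2 (nbrF_adj F (by omega : 0 < F.degree v)).symm).symm
  have hQmem : ∀ v ∈ Q, nbr v ∈ Q := by
    intro v hv
    obtain ⟨h1, h2⟩ := hQdeg v hv
    have hmemA : nbr v ∈ A := by
      rw [hAdef]; exact Finset.mem_filter.mpr ⟨Finset.mem_univ _, h2⟩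
    rw [hQdef]
    refine Finset.mem_filter.mpr ⟨hmemA, ?_⟩
    show F.degree (nbr (nbr v)) = 1
    rw [hQnn v hv]; exact h1
  have hQne : ∀ v ∈ Q, ord v ≠ ord (nbr v) := by
    intro v hv h
    obtain ⟨h1, _⟩ := hQdeg v hv
    exact (nbrF_adj F (by omega : 0 < F.degree v)).ne (hordinj _ _ h)
  -- R' card = R card
  have hRR' : R'.card = R.card := by
    apply Finset.card_bij' (fun a _ => nbr a) (fun a _ => nbr a)
    · intro a ha
      rw [hRdef, Finset.mem_filter]
      have haQ := hR'Q ha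
      refine ⟨hQmem a haQ, ?_⟩
      rw [hQnn a haQ]
      rw [hR'def, Finset.mem_filter] at ha
      exact ha.2
    · intro a ha
      rw [hR'def, Finset.mem_filter]
      have haQ := hRQ ha
      refine ⟨hQmem a haQ, ?_⟩
      rw [hQnn a haQ]
      rw [hRdef, Finset.mem_filter] at ha
      exact ha.2
    · intro a ha; exact hQnn a (hR'Q ha)
    · intro a ha; exact hQnn a (hRQ ha)
  have hQcard : Q.card = R.card + R'.card := by
    have hu : R ∪ R' = Q := by
      ext v
      simp only [hRdef, hR'def, Finset.mem_union, Finset.mem_filter]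
      constructor
      · rintro (⟨h, _⟩ | ⟨h, _⟩) <;> exact h
      · intro h
        have := hQne v h
        rcases Nat.lt_or_ge (ord (nbr v)) (ord v) with hlt | hge
        · exact Or.inl ⟨h, hlt⟩
        · exact Or.inr ⟨h, by omega⟩
    have hd : Disjoint R R' := by
      rw [Finset.disjoint_left]
      intro v hv hv'
      rw [hRdef, Finset.mem_filter] at hv
      rw [hR'def, Finset.mem_filter] at hv'
      omega
    rw [← hu, Finset.card_union_of_disjoint hd]
  -- isolated vertices
  have hD0iso : ∀ a ∈ D0, ∀ b, ¬ F.Adj a b := by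
    intro a ha b hb
    rw [hD0def, Finset.mem_filter] at ha
    have h1 : b ∈ F.neighborFinset a := (F.mem_neighborFinset a b).mpr hb
    have h2 := Finset.card_pos.mpr ⟨b, h1⟩
    rw [F.card_neighborFinset_eq_degree, ha.2] at h2
    omega
  have hR'reach : ∀ v ∈ R', ∀ t, F.Reachable v t → t = v ∨ t = nbr v := by
    intro v hv t hr
    have hvQ := hR'Q hv
    obtain ⟨h1, h2⟩ := hQdeg v hvQ
    refine reach_pair (fun w hw => nbrF_uniq F h1 hw) (fun w hw => ?_) hr
    have h3 : w = nbr (nbr v) := nbrF_uniq F h2 hw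
    rw [hQnn v hvQ] at h3
    exact h3
  have hreach : ∀ a ∈ D0 ∪ R', ∀ b, F.Reachable a b → a ≠ b → (a ∈ R' ∧ b = nbr a) := by
    intro a ha b hr hne
    rcases Finset.mem_union.mp ha with ha' | ha'
    · exact absurd (reach_isolated (hD0iso a ha') hr) (Ne.symm hne)
    · rcases hR'reach a ha' b hr with rfl | h
      · exact absurd rfl hne
      · exact ⟨ha', h⟩
  have hordR' : ∀ v ∈ R', ord v < ord (nbr v) := by
    intro v hv
    rw [hR'def, Finset.mem_filter] at hv
    exact hv.2
  have hDR'disj : Disjoint D0 R' := by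
    rw [Finset.disjoint_left]
    intro v hv hv'
    rw [hD0def, Finset.mem_filter] at hv
    have := (hQdeg v (hR'Q hv')).1
    omega
  -- independent set among leaves
  have hS1ind : ∀ u ∈ A \ R, ∀ v ∈ A \ R, ¬ F.Adj u v := by
    intro u hu v hv hadj
    rw [Finset.mem_sdiff] at hu hv
    have hdu := hAdeg u hu.1
    have hdv := hAdeg v hv.1
    have huv : v = nbr u := nbrF_uniq F hdu hadj
    have hvu : u = nbr v := nbrF_uniq F hdv hadj.symm
    have huQ : u ∈ Q := by
      rw [hQdef, Finset.mem_filter]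
      exact ⟨hu.1, by rw [← huv]; exact hdv⟩
    have hvQ : v ∈ Q := by
      rw [hQdef, Finset.mem_filter]
      exact ⟨hv.1, by rw [← hvu]; exact hdu⟩
    have hne : ord u ≠ ord v := fun h => hadj.ne (hordinj _ _ h)
    rcases Nat.lt_or_ge (ord u) (ord v) with hlt | hge
    · exact hv.2 (by rw [hRdef, Finset.mem_filter]; exact ⟨hvQ, by rw [← hvu]; exact hlt⟩)
    · exact hu.2 (by rw [hRdef, Finset.mem_filter]; exact ⟨huQ, by rw [← huv]; omega⟩)
  have hS1card : (A \ R).card = A.card - R.card :=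
    Finset.card_sdiff_of_subset (hRQ.trans hQA)
  have hRA : R.card ≤ A.card := Finset.card_le_card (hRQ.trans hQA)
  have hD0deg : ∀ v ∈ D0, F.degree v = 0 := by
    intro v hv; rw [hD0def, Finset.mem_filter] at hv; exact hv.2
  -- case split
  by_cases hcase : ∃ z, 2 ≤ F.degree z
  · -- there is a vertex of degree ≥ 2
    obtain ⟨z, hz⟩ := hcase
    set C := insert z (D0 ∪ R') with hCdef
    have hzmem : z ∉ D0 ∪ R' := by
      intro h
      rcases Finset.mem_union.mp h with h' | h'
      · have := hD0deg z h'; omega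
      · have := (hQdeg z (hR'Q h')).1; omega
    have hCpair : ∀ x ∈ C, ∀ y ∈ C, x ≠ y → ¬ F.Reachable x y := by
      intro x hx y hy hxy hr
      rcases Finset.mem_insert.mp hx with rfl | hx' <;>
        rcases Finset.mem_insert.mp hy with rfl | hy'
      · exact hxy rfl
      · obtain ⟨hyR, hzy⟩ := hreach y hy' x hr.symm (Ne.symm hxy)
        have := (hQdeg y (hR'Q hyR)).2
        rw [← hzy] at this
        omega
      · obtain ⟨hxR, hzx⟩ := hreach x hx' y hr hxy
        have := (hQdeg x (hR'Q hxR)).2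
        rw [← hzx] at this
        omega
      · obtain ⟨hxR, hyx⟩ := hreach x hx' y hr hxy
        obtain ⟨hyR, hxy'⟩ := hreach y hy' x hr.symm (Ne.symm hxy)
        have h1 := hordR' x hxR
        have h2 := hordR' y hyR
        rw [← hyx] at h1
        rw [← hxy'] at h2
        omega
    have hCcard : C.card = D0.card + R'.card + 1 := by
      rw [hCdef, Finset.card_insert_of_notMem hzmem, Finset.card_union_of_disjoint hDR'disj]
    have hml := master _ F hacyc rfl C hCpair
    -- handshake and sum bounds
    have hhs : ∑ v, F.degree v = 2 * F.edgeFinset.card := F.sum_degrees_eq_twice_card_edges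
    have hncard : F.edgeSet.ncard = F.edgeFinset.card := Set.ncard_eq_toFinset_card' _
    have hsumlb : A.card + 2 * B.card + 3 * Mst.card ≤ ∑ v, F.degree v := by
      have hsub : A ∪ (B ∪ Mst) ⊆ univ := Finset.subset_univ _
      have d2 : Disjoint A (B ∪ Mst) := by
        rw [Finset.disjoint_left]
        intro v hv hv'
        simp only [hAdef, hBdef, hMdef, Finset.mem_union, Finset.mem_filter,
          Finset.mem_univ, true_and] at hv hv'
        omega
      have d3 : Disjoint B Mst := by
        rw [Finset.disjoint_left]
        intro v hv hv'
        simp only [hBdef, hMdef, Finset.mem_filter, Finset.mem_univ, true_and] at hv hv'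
        omega
      have hA : ∑ v ∈ A, F.degree v = A.card := by
        rw [Finset.sum_congr rfl (fun v hv => hAdeg v hv), Finset.sum_const, smul_eq_mul,
          mul_one]
      have hB : ∑ v ∈ B, F.degree v = 2 * B.card := by
        have : ∀ v ∈ B, F.degree v = 2 := by
          intro v hv; rw [hBdef, Finset.mem_filter] at hv; exact hv.2
        rw [Finset.sum_congr rfl this, Finset.sum_const, smul_eq_mul, mul_comm]
      have hM : 3 * Mst.card ≤ ∑ v ∈ Mst, F.degree v := by
        have : ∀ v ∈ Mst, 3 ≤ F.degree v := by
          intro v hv; rw [hMdef, Finset.mem_filter] at hv; exact hv.2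
        calc 3 * Mst.card = ∑ _v ∈ Mst, 3 := by rw [Finset.sum_const, smul_eq_mul, mul_comm]
        _ ≤ _ := Finset.sum_le_sum this
      calc A.card + 2 * B.card + 3 * Mst.card
          ≤ ∑ v ∈ A, F.degree v + ∑ v ∈ B, F.degree v + ∑ v ∈ Mst, F.degree v := by
            rw [hA, hB]; omega
        _ = ∑ v ∈ A ∪ (B ∪ Mst), F.degree v := by
            rw [Finset.sum_union d2, Finset.sum_union d3]; ring
        _ ≤ ∑ v, F.degree v := Finset.sum_le_sum_of_subset hsub
    -- half independent set in B
    obtain ⟨S2, hS2sub, hS2ind, hS2card⟩ := half_indep F hacyc B.card B rfl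
    -- arithmetic
    rw [hCcard] at hml
    have hkey : n + 2 ≤ D0.card + 2 * (A \ R).card + 2 * S2.card := by
      rw [hS1card]
      omega
    -- choose the best set
    rcases Nat.le_total D0.card (A \ R).card with h01 | h01
    · rcases Nat.le_total (A \ R).card S2.card with h12 | h12
      · exact ⟨S2, ⟨2, fun v hv => by
          have := hS2sub hv; rw [hBdef, Finset.mem_filter] at this; exact this.2⟩,
          hS2ind, finishR n _ (by omega)⟩
      · exact ⟨A \ R, ⟨1, fun v hv => hAdeg v (Finset.mem_sdiff.mp hv).1⟩,
          hS1ind, finishR n _ (by omega)⟩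
    · rcases Nat.le_total D0.card S2.card with h02 | h02
      · exact ⟨S2, ⟨2, fun v hv => by
          have := hS2sub hv; rw [hBdef, Finset.mem_filter] at this; exact this.2⟩,
          hS2ind, finishR n _ (by omega)⟩
      · refine ⟨D0, ⟨0, hD0deg⟩, fun u hu v _ hadj => hD0iso u hu v hadj,
          finishR n _ (by omega)⟩
  · -- all degrees ≤ 1
    push_neg at hcase
    have hB0 : B.card = 0 := by
      rw [Finset.card_eq_zero, hBdef, Finset.filter_eq_empty_iff]
      intro v _
      have := hcase v
      omega
    have hM0 : Mst.card = 0 := by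
      rw [Finset.card_eq_zero, hMdef, Finset.filter_eq_empty_iff]
      intro v _
      have := hcase v
      omega
    have hQA' : Q = A := by
      apply Finset.Subset.antisymm hQA
      intro v hv
      have hdv := hAdeg v hv
      have hadj := nbrF_adj F (by omega : 0 < F.degree v)
      have h1 : 1 ≤ F.degree (nbr v) := by
        have : v ∈ F.neighborFinset (nbr v) := (F.mem_neighborFinset _ _).mpr hadj.symm
        have := Finset.card_pos.mpr ⟨v, this⟩
        rw [F.card_neighborFinset_eq_degree] at this
        omega
      have h2 := hcase (nbr v)
      rw [hQdef, Finset.mem_filter]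
      exact ⟨hv, by omega⟩
    set C := D0 ∪ R' with hCdef
    have hCpair : ∀ x ∈ C, ∀ y ∈ C, x ≠ y → ¬ F.Reachable x y := by
      intro x hx y hy hxy hr
      obtain ⟨hxR, hyx⟩ := hreach x hx y hr hxy
      obtain ⟨hyR, hxy'⟩ := hreach y hy x hr.symm (Ne.symm hxy)
      have h1 := hordR' x hxR
      have h2 := hordR' y hyR
      rw [← hyx] at h1
      rw [← hxy'] at h2
      omega
    have hml := master _ F hacyc rfl C hCpair
    rw [hCdef, Finset.card_union_of_disjoint hDR'disj] at hml
    have hacard : A.card = R.card + R'.card := by rw [← hQA']; exact hQcard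
    rcases Nat.le_total D0.card (A \ R).card with h01 | h01
    · exact ⟨A \ R, ⟨1, fun v hv => hAdeg v (Finset.mem_sdiff.mp hv).1⟩,
        hS1ind, finishR n _ (by omega)⟩
    · refine ⟨D0, ⟨0, hD0deg⟩, fun u hu v _ hadj => hD0iso u hu v hadj,
        finishR n _ (by omega)⟩
end

section
/- For every forest F on n ≥ 3 vertices, there exists a set S of vertices, all of the same degree in F, such that the induced subgraph on S has maximum degree at most 1 and |S| ≥ 2(n+2)/9. -/
open Finset SimpleGraph

section Aux

variable {V : Type*} [Fintype V] [DecidableEq V]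

/-- In a path, the head has a unique incident edge. -/
private lemma head_nbr_unique {G : SimpleGraph V} {v u x y : V} {p : G.Walk v u}
    (hp : p.IsPath) (hx : s(v, x) ∈ p.edges) (hy : s(v, y) ∈ p.edges) : x = y := by
  cases p with
  | nil => simp at hx
  | @cons _ w _ h q =>
    rw [SimpleGraph.Walk.cons_isPath_iff] at hp
    have key : ∀ z : V, s(v, z) ∈ (Walk.cons h q).edges → z = w := by
      intro z hz
      rw [SimpleGraph.Walk.edges_cons, List.mem_cons] at hz
      rcases hz with h1 | h1
      · rcases Sym2.eq_iff.mp h1 with ⟨-, rfl⟩ | ⟨h2, h3⟩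
        · rfl
        · exact absurd h2 h.ne
      · exact absurd (SimpleGraph.Walk.fst_mem_support_of_mem_edges q h1) hp.2
    rw [key x hx, key y hy]

/-- In a forest, every finite nonempty vertex set contains a vertex with at most one
neighbour inside the set. -/
private lemma exists_low_deg {F : SimpleGraph V} [DecidableRel F.Adj] (hacyc : F.IsAcyclic)
    (C : Finset V) (hC : C.Nonempty) : ∃ u ∈ C, (C.filter (F.Adj u)).card ≤ 1 := by
  by_contra hcon
  push_neg at hcon
  have key : ∀ k : ℕ, ∃ (v u : V) (p : F.Walk v u), p.IsPath ∧ (∀ x ∈ p.support, x ∈ C) ∧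
      p.length = k := by
    intro k
    induction k with
    | zero =>
      obtain ⟨v, hv⟩ := hC
      exact ⟨v, v, Walk.nil, Walk.IsPath.nil, by simp [hv], rfl⟩
    | succ k ih =>
      obtain ⟨v, u, p, hp, hsupp, hlen⟩ := ih
      have hv : v ∈ C := hsupp v p.start_mem_support
      obtain ⟨a, ha, b, hb, hab⟩ := Finset.one_lt_card.mp (hcon v hv)
      rw [Finset.mem_filter] at ha hb
      obtain ⟨v', hv'C, hv'adj, hv'edge⟩ : ∃ v', v' ∈ C ∧ F.Adj v v' ∧ s(v, v') ∉ p.edges := by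
        by_cases hea : s(v, a) ∈ p.edges
        · exact ⟨b, hb.1, hb.2, fun heb => hab (head_nbr_unique hp hea heb)⟩
        · exact ⟨a, ha.1, ha.2, hea⟩
      have hv'supp : v' ∉ p.support := by
        intro hmem
        have hcyc := (SimpleGraph.Walk.cons_isCycle_iff (p.takeUntil v' hmem) hv'adj.symm).mpr
          ⟨hp.takeUntil hmem, fun he => hv'edge (by
            have := SimpleGraph.Walk.edges_takeUntil_subset p hmem he
            rwa [Sym2.eq_swap] at this)⟩
        exact hacyc _ hcyc
      refine ⟨v', u, Walk.cons hv'adj.symm p,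
        (SimpleGraph.Walk.cons_isPath_iff _ _).mpr ⟨hp, hv'supp⟩, ?_, by simp [hlen]⟩
      intro x hx
      rw [SimpleGraph.Walk.support_cons, List.mem_cons] at hx
      rcases hx with rfl | hx
      · exact hv'C
      · exact hsupp x hx
  obtain ⟨v, u, p, hp, -, hlen⟩ := key (Fintype.card V)
  have := hp.length_lt
  omega

/-- Edge-counting inside a finite set in a forest. -/
private lemma sum_filter_le {F : SimpleGraph V} [DecidableRel F.Adj] (hacyc : F.IsAcyclic) :
    ∀ C : Finset V, C.Nonempty → (∑ v ∈ C, (C.filter (F.Adj v)).card) + 2 ≤ 2 * C.card := by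
  intro C
  induction C using Finset.strongInduction with
  | _ C ih =>
    intro hC
    obtain ⟨u, hu, hdeg⟩ := exists_low_deg hacyc C hC
    set C' := C.erase u with hC'
    have hins : C = insert u C' := by
      rw [hC', Finset.insert_erase hu]
    have hunotin : u ∉ C' := Finset.notMem_erase u C
    by_cases hC'emp : C' = ∅
    · have hCu : C = {u} := by rw [hins, hC'emp]; rfl
      have : (C.filter (F.Adj u)).card = 0 := by
        rw [Finset.card_eq_zero, Finset.filter_eq_empty_iff]
        intro x hx
        rw [hCu, Finset.mem_singleton] at hx
        subst hx
        exact F.irrefl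
      rw [hCu]
      simp only [Finset.sum_singleton, Finset.card_singleton]
      rw [hCu] at this
      omega
    · have hC'ne : C'.Nonempty := Finset.nonempty_of_ne_empty hC'emp
      have hsub : C' ⊂ C := Finset.erase_ssubset hu
      have ihC' := ih C' hsub hC'ne
      have hsplit : ∑ v ∈ C, (C.filter (F.Adj v)).card
          = (C.filter (F.Adj u)).card + ∑ v ∈ C', (C.filter (F.Adj v)).card := by
        rw [hins, Finset.sum_insert hunotin]
      have hterm : ∀ v ∈ C', (C.filter (F.Adj v)).card
          = (C'.filter (F.Adj v)).card + (if F.Adj v u then 1 else 0) := by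
        intro v hv
        rw [hins, Finset.filter_insert]
        by_cases hadj : F.Adj v u
        · rw [if_pos hadj, Finset.card_insert_of_notMem (fun hmem => hunotin (Finset.mem_of_mem_filter u hmem)), if_pos hadj]
        · rw [if_neg hadj, if_neg hadj, Nat.add_zero]
      have hsum2 : ∑ v ∈ C', (C.filter (F.Adj v)).card
          = (∑ v ∈ C', (C'.filter (F.Adj v)).card) + ∑ v ∈ C', (if F.Adj v u then 1 else 0) := by
        rw [← Finset.sum_add_distrib]
        exact Finset.sum_congr rfl hterm
      have hind : ∑ v ∈ C', (if F.Adj v u then 1 else 0) = (C'.filter (fun v => F.Adj v u)).card := by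
        rw [Finset.card_filter]
      have hle1 : (C'.filter (fun v => F.Adj v u)).card ≤ 1 := by
        refine le_trans (Finset.card_le_card ?_) hdeg
        intro x hx
        rw [Finset.mem_filter] at hx ⊢
        exact ⟨Finset.mem_of_mem_erase hx.1, hx.2.symm⟩
      have hcard : C.card = C'.card + 1 := by
        rw [hins, Finset.card_insert_of_notMem hunotin]
      omega

/-- Dissociation lemma: in a forest, any finite set of vertices of degree at most two
contains a 1-independent subset of relative size at least 2/3. -/
private lemma diss_lemma {F : SimpleGraph V} [DecidableRel F.Adj] (hacyc : F.IsAcyclic) :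
    ∀ C : Finset V, (∀ v ∈ C, F.degree v ≤ 2) →
      ∃ T ⊆ C, (∀ v ∈ T, (T.filter (F.Adj v)).card ≤ 1) ∧ 2 * C.card ≤ 3 * T.card := by
  intro C
  induction C using Finset.strongInduction with
  | _ C ih =>
    intro hdeg
    rcases Finset.eq_empty_or_nonempty C with rfl | hC
    · exact ⟨∅, Finset.Subset.refl _, by simp, by simp⟩
    obtain ⟨u, hu, hlow⟩ := exists_low_deg hacyc C hC
    interval_cases h : (C.filter (F.Adj u)).card
    · -- no neighbours of u inside C
      have hempty : C.filter (F.Adj u) = ∅ := Finset.card_eq_zero.mp h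
      have hnoadj : ∀ x ∈ C, ¬ F.Adj u x := by
        intro x hx hadj
        have : x ∈ C.filter (F.Adj u) := Finset.mem_filter.mpr ⟨hx, hadj⟩
        simp [hempty] at this
      set C' := C.erase u with hC'def
      have hsub : C' ⊂ C := Finset.erase_ssubset hu
      obtain ⟨T', hT'sub, hT'ind, hT'card⟩ := ih C' hsub
        (fun v hv => hdeg v (Finset.mem_of_mem_erase hv))
      have huT' : u ∉ T' := fun hmem => Finset.notMem_erase u C (hT'sub hmem)
      refine ⟨insert u T', ?_, ?_, ?_⟩
      · intro x hx
        rcases Finset.mem_insert.mp hx with rfl | hx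
        · exact hu
        · exact Finset.mem_of_mem_erase (hT'sub hx)
      · intro v hv
        rcases Finset.mem_insert.mp hv with rfl | hv
        · have : (insert v T').filter (F.Adj v) = ∅ := by
            rw [Finset.filter_eq_empty_iff]
            intro x hx
            rcases Finset.mem_insert.mp hx with rfl | hx
            · exact F.irrefl
            · exact hnoadj x (Finset.mem_of_mem_erase (hT'sub hx))
          rw [this]; simp
        · have : (insert u T').filter (F.Adj v) = T'.filter (F.Adj v) := by
            rw [Finset.filter_insert, if_neg]
            intro hadj
            exact hnoadj v (Finset.mem_of_mem_erase (hT'sub hv)) hadj.symm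
          rw [this]
          exact hT'ind v hv
      · have hcard : C.card = C'.card + 1 := by
          rw [hC'def, Finset.card_erase_of_mem hu]
          have := Finset.card_pos.mpr hC
          omega
        rw [Finset.card_insert_of_notMem huT']
        omega
    · -- exactly one neighbour w of u inside C
      obtain ⟨w, hw⟩ := Finset.card_eq_one.mp h
      have hwC : w ∈ C := by
        have : w ∈ C.filter (F.Adj u) := by rw [hw]; exact Finset.mem_singleton_self w
        exact (Finset.mem_filter.mp this).1
      have hadj : F.Adj u w := by
        have : w ∈ C.filter (F.Adj u) := by rw [hw]; exact Finset.mem_singleton_self w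
        exact (Finset.mem_filter.mp this).2
      have huw : u ≠ w := F.ne_of_adj hadj
      -- u's only neighbour in C is w
      have huC : ∀ x ∈ C, F.Adj u x → x = w := by
        intro x hx hadjx
        have : x ∈ C.filter (F.Adj u) := Finset.mem_filter.mpr ⟨hx, hadjx⟩
        rwa [hw, Finset.mem_singleton] at this
      set R := insert w (C.filter (F.Adj w)) with hRdef
      have hRcard : R.card ≤ 3 := by
        have h1 : (C.filter (F.Adj w)).card ≤ F.degree w := by
          rw [← SimpleGraph.card_neighborFinset_eq_degree]
          apply Finset.card_le_card
          intro x hx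
          rw [SimpleGraph.mem_neighborFinset]
          exact (Finset.mem_filter.mp hx).2
        have h2 := hdeg w hwC
        calc R.card ≤ (C.filter (F.Adj w)).card + 1 := Finset.card_insert_le _ _
          _ ≤ 3 := by omega
      set C' := C \ R with hC'def
      have huR : u ∈ R := by
        rw [hRdef]
        exact Finset.mem_insert_of_mem (Finset.mem_filter.mpr ⟨hu, hadj.symm⟩)
      have hwR : w ∈ R := Finset.mem_insert_self w _
      have hsub : C' ⊂ C := by
        rw [hC'def]
        refine Finset.ssubset_iff_of_subset (Finset.sdiff_subset) |>.mpr ?_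
        exact ⟨u, hu, fun hmem => (Finset.mem_sdiff.mp hmem).2 huR⟩
      obtain ⟨T', hT'sub, hT'ind, hT'card⟩ := ih C' hsub
        (fun v hv => hdeg v (Finset.mem_sdiff.mp (hv)).1)
      have hT'C : ∀ x ∈ T', x ∈ C ∧ x ∉ R := fun x hx => Finset.mem_sdiff.mp (hT'sub hx)
      have huT' : u ∉ T' := fun hmem => (hT'C u hmem).2 huR
      have hwT' : w ∉ T' := fun hmem => (hT'C w hmem).2 hwR
      -- no adjacency from u or w into T'
      have hunoT' : ∀ x ∈ T', ¬ F.Adj u x := by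
        intro x hx hadjx
        have := huC x (hT'C x hx).1 hadjx
        subst this
        exact hwT' hx
      have hwnoT' : ∀ x ∈ T', ¬ F.Adj w x := by
        intro x hx hadjx
        exact (hT'C x hx).2 (by
          rw [hRdef]
          exact Finset.mem_insert_of_mem (Finset.mem_filter.mpr ⟨(hT'C x hx).1, hadjx⟩))
      refine ⟨insert u (insert w T'), ?_, ?_, ?_⟩
      · intro x hx
        rcases Finset.mem_insert.mp hx with rfl | hx
        · exact hu
        rcases Finset.mem_insert.mp hx with rfl | hx
        · exact hwC
        · exact (hT'C x hx).1
      · intro v hv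
        rcases Finset.mem_insert.mp hv with rfl | hv
        · -- v = u : only neighbour in T is w
          refine le_trans (Finset.card_le_card (fun x hx => ?_)) (Finset.card_singleton w).le
          obtain ⟨hxT, hxadj⟩ := Finset.mem_filter.mp hx
          rw [Finset.mem_singleton]
          rcases Finset.mem_insert.mp hxT with rfl | hxT
          · exact absurd hxadj F.irrefl
          rcases Finset.mem_insert.mp hxT with rfl | hxT
          · rfl
          · exact absurd hxadj (hunoT' x hxT)
        rcases Finset.mem_insert.mp hv with rfl | hv
        · -- v = w : only neighbour in T is u
          refine le_trans (Finset.card_le_card (fun x hx => ?_)) (Finset.card_singleton u).le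
          obtain ⟨hxT, hxadj⟩ := Finset.mem_filter.mp hx
          rw [Finset.mem_singleton]
          rcases Finset.mem_insert.mp hxT with rfl | hxT
          · rfl
          rcases Finset.mem_insert.mp hxT with rfl | hxT
          · exact absurd hxadj F.irrefl
          · exact absurd hxadj (hwnoT' x hxT)
        · -- v ∈ T'
          have : (insert u (insert w T')).filter (F.Adj v) = T'.filter (F.Adj v) := by
            rw [Finset.filter_insert, if_neg (fun hadjvu => hunoT' v hv hadjvu.symm),
              Finset.filter_insert, if_neg (fun hadjvw => hwnoT' v hv hadjvw.symm)]
          rw [this]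
          exact hT'ind v hv
      · have hcardC : C.card ≤ C'.card + 3 := by
          have : C ⊆ C' ∪ R := by
            intro x hx
            rw [Finset.mem_union, hC'def, Finset.mem_sdiff]
            by_cases hxR : x ∈ R
            · exact Or.inr hxR
            · exact Or.inl ⟨hx, hxR⟩
          calc C.card ≤ (C' ∪ R).card := Finset.card_le_card this
            _ ≤ C'.card + R.card := Finset.card_union_le _ _
            _ ≤ C'.card + 3 := by omega
        have hcardT : (insert u (insert w T')).card = T'.card + 2 := by
          rw [Finset.card_insert_of_notMem (by
            intro hmem
            rcases Finset.mem_insert.mp hmem with h' | h'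
            · exact huw h'
            · exact huT' h'), Finset.card_insert_of_notMem hwT']
        omega

end Aux

/-- For every forest `F` on `n ≥ 3` vertices there is a set of vertices all of the same
degree, inducing a subgraph of maximum degree at most `1`, of size at least `2(n+2)/9`. -/
theorem reg1Indep_forest {V : Type*} [Fintype V] [DecidableEq V] (F : SimpleGraph V)
    [DecidableRel F.Adj] (hacyc : F.IsAcyclic) (hn : 3 ≤ Fintype.card V) :
    ∃ S : Finset V, (∃ d : ℕ, ∀ v ∈ S, F.degree v = d) ∧
      (∀ v ∈ S, (S.filter (F.Adj v)).card ≤ 1) ∧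
      2 * ((Fintype.card V : ℝ) + 2) / 9 ≤ (S.card : ℝ) := by
  classical
  set n := Fintype.card V with hndef
  -- basic fact : degree v = card of filter Adj
  have hdegfilter : ∀ v : V, F.degree v = (Finset.univ.filter (F.Adj v)).card := by
    intro v
    rw [← SimpleGraph.card_neighborFinset_eq_degree]
    congr 1
    ext x
    simp [SimpleGraph.mem_neighborFinset]
  -- final numeric step
  have final : ∀ S : Finset V, 2 * n + 4 ≤ 9 * S.card →
      2 * ((n : ℝ) + 2) / 9 ≤ (S.card : ℝ) := by
    intro S hS
    rw [div_le_iff₀ (by norm_num)]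
    push_cast
    have : (2 * n + 4 : ℝ) ≤ 9 * S.card := by exact_mod_cast hS
    linarith
  set A := Finset.univ.filter (fun v => F.degree v = 0) with hA
  set B := Finset.univ.filter (fun v => F.degree v = 1) with hB
  set Cc := Finset.univ.filter (fun v => F.degree v = 2) with hCc
  set D := Finset.univ.filter (fun v => 3 ≤ F.degree v) with hD
  by_cases hallzero : ∀ v : V, F.degree v = 0
  · refine ⟨Finset.univ, ⟨0, fun v _ => hallzero v⟩, ?_, ?_⟩
    · intro v _
      have : Finset.univ.filter (F.Adj v) = ∅ := by
        rw [Finset.filter_eq_empty_iff]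
        intro x _ hadj
        have := hdegfilter v
        rw [hallzero v] at this
        have hx : x ∈ Finset.univ.filter (F.Adj v) := by simp [hadj]
        rw [Finset.card_eq_zero.mp this.symm] at hx
        simp at hx
      refine le_trans (Finset.card_le_card (fun x hx => ?_)) (by simp [this] : (Finset.univ.filter (F.Adj v)).card ≤ 1)
      exact Finset.mem_filter.mpr ⟨Finset.mem_univ x, (Finset.mem_filter.mp hx).2⟩
    · apply final
      rw [Finset.card_univ, ← hndef]
      omega
  · -- there is a vertex of positive degree
    push_neg at hallzero
    set Sup := Finset.univ.filter (fun v => F.degree v ≠ 0) with hSup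
    have hSupne : Sup.Nonempty := by
      obtain ⟨v, hv⟩ := hallzero
      exact ⟨v, by simp [hSup, hv]⟩
    -- neighbours of any vertex lie in Sup
    have hnbr : ∀ v : V, Sup.filter (F.Adj v) = Finset.univ.filter (F.Adj v) := by
      intro v
      ext x
      simp only [hSup, Finset.mem_filter, Finset.filter_filter, Finset.mem_univ, true_and]
      refine ⟨fun h => h.2, fun h => ⟨?_, h⟩⟩
      intro hdx
      have := hdegfilter x
      rw [hdx] at this
      have hv : v ∈ Finset.univ.filter (F.Adj x) := by simp [h.symm]
      rw [Finset.card_eq_zero.mp this.symm] at hv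
      simp at hv
    have hsum := sum_filter_le hacyc Sup hSupne
    have hsumdeg : ∑ v ∈ Sup, F.degree v = ∑ v ∈ Sup, (Sup.filter (F.Adj v)).card := by
      refine Finset.sum_congr rfl (fun v _ => ?_)
      rw [hnbr v, hdegfilter v]
    rw [← hsumdeg] at hsum
    -- split Sup into B, Cc, D
    have hSupsplit : Sup = B ∪ Cc ∪ D := by
      ext v
      simp only [hSup, hB, hCc, hD, Finset.mem_union, Finset.mem_filter, Finset.mem_univ, true_and]
      omega
    have hdisjBC : Disjoint B Cc := by
      rw [Finset.disjoint_filter]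
      intro v _ h1
      omega
    have hdisjBCD : Disjoint (B ∪ Cc) D := by
      rw [Finset.disjoint_union_left]
      constructor <;> (rw [Finset.disjoint_filter]; intro v _ h1; omega)
    have hSupcard : Sup.card = B.card + Cc.card + D.card := by
      rw [hSupsplit, Finset.card_union_of_disjoint hdisjBCD, Finset.card_union_of_disjoint hdisjBC]
    have hsumsplit : ∑ v ∈ Sup, F.degree v
        = (∑ v ∈ B, F.degree v) + (∑ v ∈ Cc, F.degree v) + (∑ v ∈ D, F.degree v) := by
      rw [hSupsplit, Finset.sum_union hdisjBCD, Finset.sum_union hdisjBC]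
    have hsB : ∑ v ∈ B, F.degree v = B.card := by
      rw [Finset.sum_congr rfl (fun v hv => (Finset.mem_filter.mp hv).2)]
      simp
      rfl
    have hsC : ∑ v ∈ Cc, F.degree v = 2 * Cc.card := by
      rw [Finset.sum_congr rfl (fun v hv => (Finset.mem_filter.mp hv).2)]
      simp [Nat.mul_comm]
      rfl
    have hsD : 3 * D.card ≤ ∑ v ∈ D, F.degree v := by
      calc 3 * D.card = ∑ _v ∈ D, 3 := by simp [Nat.mul_comm]
        _ ≤ ∑ v ∈ D, F.degree v := Finset.sum_le_sum (fun v hv => (Finset.mem_filter.mp hv).2)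
    -- key inequality |D| + 2 ≤ |B|
    have hkey : D.card + 2 ≤ B.card := by
      have h2 : (∑ v ∈ B, F.degree v) + (∑ v ∈ Cc, F.degree v) + (∑ v ∈ D, F.degree v) + 2
          ≤ 2 * (B.card + Cc.card + D.card) := by
        rw [← hsumsplit, ← hSupcard]; exact hsum
      rw [hsB, hsC] at h2
      omega
    -- partition of all vertices
    have hncard : n = A.card + B.card + Cc.card + D.card := by
      have hsplit : (Finset.univ : Finset V) = A ∪ (B ∪ Cc ∪ D) := by
        ext v
        simp only [hA, hB, hCc, hD, Finset.mem_union, Finset.mem_filter, Finset.mem_univ,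
          true_and, true_iff]
        omega
      have hdisjA : Disjoint A (B ∪ Cc ∪ D) := by
        rw [Finset.disjoint_union_right, Finset.disjoint_union_right]
        refine ⟨⟨?_, ?_⟩, ?_⟩ <;> (rw [Finset.disjoint_filter]; intro v _ h1; omega)
      rw [hndef, ← Finset.card_univ, hsplit, Finset.card_union_of_disjoint hdisjA,
        Finset.card_union_of_disjoint hdisjBCD, Finset.card_union_of_disjoint hdisjBC]
      omega
    -- dissociation set inside Cc
    obtain ⟨T, hTsub, hTind, hTcard⟩ := diss_lemma hacyc Cc
      (fun v hv => by rw [(Finset.mem_filter.mp hv).2])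
    -- the three candidate sets
    have hmain : 2 * n + 4 ≤ 2 * A.card + 4 * B.card + 3 * T.card := by omega
    by_cases h1 : B.card ≤ A.card ∧ T.card ≤ A.card
    · refine ⟨A, ⟨0, fun v hv => (Finset.mem_filter.mp hv).2⟩, ?_, ?_⟩
      · intro v hv
        have hvdeg : F.degree v = 0 := (Finset.mem_filter.mp hv).2
        have : A.filter (F.Adj v) = ∅ := by
          rw [Finset.filter_eq_empty_iff]
          intro x _ hadj
          have := hdegfilter v
          rw [hvdeg] at this
          have hx : x ∈ Finset.univ.filter (F.Adj v) := by simp [hadj]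
          rw [Finset.card_eq_zero.mp this.symm] at hx
          simp at hx
        simp [this]
      · exact final A (by omega)
    · by_cases h2 : T.card ≤ B.card
      · refine ⟨B, ⟨1, fun v hv => (Finset.mem_filter.mp hv).2⟩, ?_, ?_⟩
        · intro v hv
          have hvdeg : F.degree v = 1 := (Finset.mem_filter.mp hv).2
          calc (B.filter (F.Adj v)).card ≤ (Finset.univ.filter (F.Adj v)).card :=
                Finset.card_le_card (fun x hx =>
                  Finset.mem_filter.mpr ⟨Finset.mem_univ x, (Finset.mem_filter.mp hx).2⟩)
            _ = 1 := by rw [← hdegfilter v, hvdeg]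
        · refine final B ?_
          rcases Nat.le_total B.card A.card with hAB | hAB
          · omega
          · omega
      · refine ⟨T, ⟨2, fun v hv => (Finset.mem_filter.mp (hTsub hv)).2⟩, hTind, ?_⟩
        refine final T ?_
        omega
end

section
/- Let G be a graph on n vertices with average degree d, minimum degree δ, and k-chromatic number χ_k(G). Then the regular k-independence number satisfies α_{k-reg}(G) ≥ n / ((2d − 2δ + 1)·χ_k(G)). -/
open Finset

/-- The `k`-chromatic number: the least number of colors such that each color class
induces a subgraph of maximum degree at most `k`. -/
noncomputable def chiK {V : Type*} [Fintype V] [DecidableEq V] (G : SimpleGraph V)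
    [DecidableRel G.Adj] (k : ℕ) : ℕ :=
  sInf {c : ℕ | ∃ f : V → Fin c,
    ∀ v : V, (univ.filter (fun u => G.Adj v u ∧ f u = f v)).card ≤ k}

open Classical in
/-- The regular `k`-independence number: the maximum size of a set of vertices of
equal degree inducing a subgraph of maximum degree at most `k`. -/
noncomputable def regKIndepNum {V : Type*} [Fintype V] [DecidableEq V] (G : SimpleGraph V)
    [DecidableRel G.Adj] (k : ℕ) : ℕ :=
  univ.powerset.sup fun S =>
    if (∃ d : ℕ, ∀ v ∈ S, G.degree v = d) ∧ (∀ v ∈ S, (S.filter (G.Adj v)).card ≤ k)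
    then S.card else 0

section AuxRep

variable {V : Type*} [Fintype V] [DecidableEq V] (G : SimpleGraph V) [DecidableRel G.Adj]

/-- Each vertex's "number of vertices of strictly smaller degree" bound. -/
lemma aux_count_lt_le [Nonempty V]
    (r : ℕ) (hr : ∀ D : ℕ, (univ.filter fun u => G.degree u = D).card ≤ r) (v : V) :
    (univ.filter fun u => G.degree u < G.degree v).card
      ≤ r * (G.degree v - G.minDegree) := by
  have hsub : (univ.filter fun u => G.degree u < G.degree v) ⊆
      (Finset.Ico G.minDegree (G.degree v)).biUnion
        (fun D => univ.filter fun u => G.degree u = D) := by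
    intro u hu
    simp only [mem_filter, mem_univ, true_and] at hu
    refine Finset.mem_biUnion.mpr ⟨G.degree u, ?_, ?_⟩
    · exact Finset.mem_Ico.mpr ⟨G.minDegree_le_degree u, hu⟩
    · simp
  calc (univ.filter fun u => G.degree u < G.degree v).card
      ≤ ((Finset.Ico G.minDegree (G.degree v)).biUnion
          (fun D => univ.filter fun u => G.degree u = D)).card := Finset.card_le_card hsub
    _ ≤ ∑ D ∈ Finset.Ico G.minDegree (G.degree v),
          (univ.filter fun u => G.degree u = D).card := Finset.card_biUnion_le
    _ ≤ ∑ _D ∈ Finset.Ico G.minDegree (G.degree v), r :=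
          Finset.sum_le_sum fun D _ => hr D
    _ = (G.degree v - G.minDegree) * r := by
          rw [Finset.sum_const, Nat.card_Ico, smul_eq_mul]
    _ = r * (G.degree v - G.minDegree) := Nat.mul_comm _ _

/-- Repetition-number bound, natural-number form. -/
lemma aux_rep_bound [Nonempty V]
    (r : ℕ) (hr : ∀ D : ℕ, (univ.filter fun u => G.degree u = D).card ≤ r) :
    (Fintype.card V) ^ 2
      ≤ r * (2 * (∑ v, (G.degree v - G.minDegree)) + Fintype.card V) := by
  set n := Fintype.card V
  -- the double sum of "smaller degree" indicators
  set A : ℕ := ∑ v : V, (univ.filter fun u => G.degree u < G.degree v).card with hA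
  have hA' : A = ∑ v : V, ∑ u : V, (if G.degree u < G.degree v then 1 else 0) := by
    rw [hA]
    exact Finset.sum_congr rfl fun v _ => Finset.card_filter _ _
  -- n^2 ≤ 2A + n * r
  have h1 : n ^ 2 ≤ 2 * A + n * r := by
    have hsq : (n : ℕ) ^ 2 = ∑ v : V, ∑ u : V, (1 : ℕ) := by
      simp only [Finset.sum_const, Finset.card_univ, smul_eq_mul, mul_one, sq]
      rfl
    have hsplit : ∀ u v : V, (1 : ℕ) =
        (if G.degree u < G.degree v then 1 else 0) +
        (if G.degree v < G.degree u then 1 else 0) +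
        (if G.degree u = G.degree v then 1 else 0) := by
      intro u v; split_ifs <;> omega
    have hB : (∑ v : V, ∑ u : V, (if G.degree v < G.degree u then 1 else 0)) = A := by
      rw [hA', Finset.sum_comm]
    have hC : (∑ v : V, ∑ u : V, (if G.degree u = G.degree v then 1 else 0))
        ≤ n * r := by
      have : ∀ v : V, (∑ u : V, (if G.degree u = G.degree v then 1 else 0)) ≤ r := by
        intro v
        calc (∑ u : V, (if G.degree u = G.degree v then 1 else 0))
            = (univ.filter fun u => G.degree u = G.degree v).card :=
              (Finset.card_filter _ _).symm
          _ ≤ r := hr _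
      calc (∑ v : V, ∑ u : V, (if G.degree u = G.degree v then 1 else 0))
          ≤ ∑ _v : V, r := Finset.sum_le_sum fun v _ => this v
        _ = n * r := by simp [Finset.sum_const, Finset.card_univ, smul_eq_mul]; exact Or.inl rfl
    have hdouble : (∑ v : V, ∑ u : V, (1 : ℕ)) =
        (∑ v : V, ∑ u : V, (if G.degree u < G.degree v then 1 else 0)) +
        (∑ v : V, ∑ u : V, (if G.degree v < G.degree u then 1 else 0)) +
        (∑ v : V, ∑ u : V, (if G.degree u = G.degree v then 1 else 0)) := by
      rw [← Finset.sum_add_distrib, ← Finset.sum_add_distrib]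
      refine Finset.sum_congr rfl fun v _ => ?_
      rw [← Finset.sum_add_distrib, ← Finset.sum_add_distrib]
      exact Finset.sum_congr rfl fun u _ => hsplit u v
    have hEq : n ^ 2 = A + A + (∑ v : V, ∑ u : V, (if G.degree u = G.degree v then 1 else 0)) := by
      rw [hsq, hdouble, ← hA', hB]
    calc n ^ 2 = A + A + (∑ v : V, ∑ u : V, (if G.degree u = G.degree v then 1 else 0)) := hEq
      _ ≤ A + A + n * r := Nat.add_le_add_left hC _
      _ = 2 * A + n * r := by ring
  -- A ≤ r * Σ (deg v - δ)
  have h2 : A ≤ r * (∑ v, (G.degree v - G.minDegree)) := by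
    calc A ≤ ∑ v : V, r * (G.degree v - G.minDegree) :=
          Finset.sum_le_sum fun v _ => aux_count_lt_le G r hr v
      _ = r * (∑ v, (G.degree v - G.minDegree)) := by rw [Finset.mul_sum]
  calc n ^ 2 ≤ 2 * A + n * r := h1
    _ ≤ 2 * (r * (∑ v, (G.degree v - G.minDegree))) + n * r := by
        have := Nat.mul_le_mul_left 2 h2; omega
    _ = r * (2 * (∑ v, (G.degree v - G.minDegree)) + n) := by ring

end AuxRep

/-- `α_{k-reg}(G) ≥ n / ((2d − 2δ + 1) · χ_k(G))` where `d` is the average degree and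
`δ` the minimum degree. -/
theorem regKIndepNum_lower_bound {V : Type*} [Fintype V] [DecidableEq V] [Nonempty V]
    (G : SimpleGraph V) [DecidableRel G.Adj] (k : ℕ) (d : ℝ)
    (hd : d = (∑ v : V, (G.degree v : ℝ)) / (Fintype.card V : ℝ)) :
    (Fintype.card V : ℝ) / ((2 * d - 2 * (G.minDegree : ℝ) + 1) * (chiK G k : ℝ))
      ≤ (regKIndepNum G k : ℝ) := by
  classical
  set n := Fintype.card V with hn
  have hnpos : 0 < n := Fintype.card_pos
  have hnR : (0 : ℝ) < (n : ℝ) := by exact_mod_cast hnpos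
  set δ := G.minDegree with hδ
  set χ := chiK G k with hχ
  -- the chromatic set is nonempty, hence the infimum is attained
  have hmem : χ ∈ {c : ℕ | ∃ f : V → Fin c,
      ∀ v : V, (univ.filter (fun u => G.Adj v u ∧ f u = f v)).card ≤ k} := by
    apply Nat.sInf_mem
    refine ⟨n, (Fintype.equivFin V : V ≃ Fin n), ?_⟩
    intro v
    have : (univ.filter (fun u => G.Adj v u ∧ (Fintype.equivFin V) u = (Fintype.equivFin V) v))
        = ∅ := by
      rw [Finset.filter_eq_empty_iff]
      rintro u - ⟨hadj, heq⟩
      exact G.ne_of_adj hadj ((Fintype.equivFin V).injective heq).symm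
    rw [this]
    simp
  obtain ⟨f, hf⟩ := hmem
  have hχpos : 0 < χ := Nat.pos_of_ne_zero fun h =>
    (Fin.cast h (f (Classical.arbitrary V))).elim0
  -- repetition number r
  set cnt : ℕ → ℕ := fun D => (univ.filter fun u => G.degree u = D).card with hcnt
  set r : ℕ := univ.sup (fun v : V => cnt (G.degree v)) with hrdef
  have hr : ∀ D : ℕ, cnt D ≤ r := by
    intro D
    rcases Finset.eq_empty_or_nonempty (univ.filter fun u => G.degree u = D) with h | h
    · simp [hcnt, h]
    · obtain ⟨u, hu⟩ := h
      simp only [mem_filter, mem_univ, true_and] at hu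
      calc cnt D = cnt (G.degree u) := by rw [hu]
        _ ≤ r := Finset.le_sup (f := fun v : V => cnt (G.degree v)) (mem_univ u)
  obtain ⟨v₀, -, hv₀⟩ := Finset.exists_mem_eq_sup (univ : Finset V) univ_nonempty
    (fun v : V => cnt (G.degree v))
  set R : Finset V := univ.filter fun u => G.degree u = G.degree v₀ with hR
  have hRcard : R.card = r := by rw [hR, hrdef, hv₀]
  -- pigeonhole over color classes
  have hfib : R.card = ∑ i : Fin χ, (R.filter fun u => f u = i).card :=
    Finset.card_eq_sum_card_fiberwise (fun x _ => mem_univ (f x))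
  have hpig : ∃ i : Fin χ, R.card ≤ χ * (R.filter fun u => f u = i).card := by
    have hne : (univ : Finset (Fin χ)).Nonempty := by
      simpa [Finset.univ_nonempty_iff] using Fin.pos_iff_nonempty.mp hχpos
    have hsum : ∑ _i : Fin χ, R.card ≤ ∑ i : Fin χ, χ * (R.filter fun u => f u = i).card := by
      rw [← Finset.mul_sum, ← hfib, Finset.sum_const, Finset.card_univ, Fintype.card_fin,
        smul_eq_mul]
    obtain ⟨i, -, hi⟩ := Finset.exists_le_of_sum_le hne hsum
    exact ⟨i, hi⟩
  obtain ⟨i, hi⟩ := hpig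
  set S : Finset V := R.filter fun u => f u = i with hS
  -- S witnesses regKIndepNum ≥ S.card
  have hcond : (∃ d : ℕ, ∀ v ∈ S, G.degree v = d) ∧
      (∀ v ∈ S, (S.filter (G.Adj v)).card ≤ k) := by
    constructor
    · exact ⟨G.degree v₀, fun v hv => by
        have := (Finset.mem_filter.mp (Finset.mem_filter.mp hv).1).2
        exact this⟩
    · intro v hv
      have hfv : f v = i := (Finset.mem_filter.mp hv).2
      have hsub : S.filter (G.Adj v) ⊆ univ.filter (fun u => G.Adj v u ∧ f u = f v) := by
        intro u hu
        simp only [Finset.mem_filter, mem_univ, true_and] at hu ⊢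
        refine ⟨hu.2, ?_⟩
        rw [hfv, (Finset.mem_filter.mp hu.1).2]
      exact le_trans (Finset.card_le_card hsub) (hf v)
  have hα : S.card ≤ regKIndepNum G k := by
    rw [regKIndepNum]
    calc S.card = (if (∃ d : ℕ, ∀ v ∈ S, G.degree v = d) ∧
          (∀ v ∈ S, (S.filter (G.Adj v)).card ≤ k) then S.card else 0) := (if_pos hcond).symm
      _ ≤ _ := Finset.le_sup (f := fun T : Finset V => if (∃ d : ℕ, ∀ v ∈ T, G.degree v = d) ∧
          (∀ v ∈ T, (T.filter (G.Adj v)).card ≤ k) then T.card else 0)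
          (Finset.mem_powerset.mpr (Finset.subset_univ S))
  -- numeric part
  have hnat : n ^ 2 ≤ r * (2 * (∑ v, (G.degree v - δ)) + n) := aux_rep_bound G r hr
  have hsumcast : ((∑ v, (G.degree v - δ) : ℕ) : ℝ)
      = (∑ v : V, (G.degree v : ℝ)) - n * δ := by
    rw [hδ, hn]
    push_cast [Nat.cast_sub (G.minDegree_le_degree _)]
    rw [Finset.sum_sub_distrib]
    simp [Finset.sum_const, Finset.card_univ, mul_comm]
  have hdeg_sum : (∑ v : V, (G.degree v : ℝ)) = n * d := by
    rw [hd]; field_simp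
  have hreal : (n : ℝ) ^ 2 ≤ (r : ℝ) * ((n : ℝ) * (2 * d - 2 * δ + 1)) := by
    have := hnat
    have hcast : ((n : ℕ) : ℝ) ^ 2
        ≤ (r : ℝ) * (2 * (((∑ v, (G.degree v - δ) : ℕ)) : ℝ) + n) := by
      exact_mod_cast this
    rw [hsumcast, hdeg_sum] at hcast
    calc ((n : ℝ)) ^ 2 ≤ (r : ℝ) * (2 * ((n : ℝ) * d - (n : ℝ) * δ) + n) := hcast
      _ = (r : ℝ) * ((n : ℝ) * (2 * d - 2 * δ + 1)) := by ring
  have hcoef : (0 : ℝ) < 2 * d - 2 * δ + 1 := by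
    have hδd : (δ : ℝ) ≤ d := by
      rw [hd]
      rw [le_div_iff₀ hnR]
      calc (δ : ℝ) * n = ∑ _v : V, (δ : ℝ) := by
            simp [Finset.sum_const, Finset.card_univ, mul_comm]; exact Or.inl rfl
        _ ≤ ∑ v : V, (G.degree v : ℝ) := by
            exact Finset.sum_le_sum fun v _ => by exact_mod_cast G.minDegree_le_degree v
    linarith
  have hnle : (n : ℝ) ≤ (r : ℝ) * (2 * d - 2 * δ + 1) := by
    have := hreal
    nlinarith [hnR]
  have hrle : (r : ℝ) ≤ (χ : ℝ) * (regKIndepNum G k : ℝ) := by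
    have h1 : r ≤ χ * S.card := by rw [← hRcard]; exact hi
    have h2 : χ * S.card ≤ χ * regKIndepNum G k := Nat.mul_le_mul_left χ hα
    exact_mod_cast le_trans h1 h2
  have hχR : (0 : ℝ) < (χ : ℝ) := by exact_mod_cast hχpos
  rw [div_le_iff₀ (by positivity)]
  have hr0 : (0 : ℝ) ≤ (r : ℝ) := Nat.cast_nonneg r
  nlinarith [hnle, hrle, hcoef, hχR]
end

section
/- Every graph G on n vertices with average degree d and minimum degree δ has at least n/(2d − 2δ + 1) vertices of equal degree; that is, the repetition number rep(G) satisfies rep(G) ≥ n/(2d − 2δ + 1). -/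
open Finset

/-- The repetition number of `G`: the maximum number of vertices of equal degree. -/
noncomputable def repNum {V : Type*} [Fintype V] [DecidableEq V] (G : SimpleGraph V)
    [DecidableRel G.Adj] : ℕ :=
  (Finset.range (Fintype.card V + 1)).sup fun j =>
    (univ.filter (fun v => G.degree v = j)).card

/-- `rep(G) ≥ n / (2d − 2δ + 1)` where `d` is the average degree and `δ` the minimum
degree. -/
theorem repNum_lower_bound {V : Type*} [Fintype V] [DecidableEq V] [Nonempty V]
    (G : SimpleGraph V) [DecidableRel G.Adj] (d : ℝ)
    (hd : d = (∑ v : V, (G.degree v : ℝ)) / (Fintype.card V : ℝ)) :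
    (Fintype.card V : ℝ) / (2 * d - 2 * (G.minDegree : ℝ) + 1) ≤ (repNum G : ℝ) := by
  classical
  set n := Fintype.card V with hn
  set δ := G.minDegree with hδdef
  set r := repNum G with hr
  have hn0 : 0 < n := Fintype.card_pos
  have hδle : ∀ v, δ ≤ G.degree v := fun v => G.minDegree_le_degree v
  -- every degree class has at most r vertices
  have hNle : ∀ j, (univ.filter fun v => G.degree v = j).card ≤ r := by
    intro j
    rcases Finset.eq_empty_or_nonempty (univ.filter fun v => G.degree v = j) with h | h
    · simp [h]
    · obtain ⟨v, hv⟩ := h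
      simp only [mem_filter] at hv
      have hlt := G.degree_lt_card_verts v
      have hj : j < n + 1 := by omega
      exact Finset.le_sup (f := fun j => (univ.filter fun v => G.degree v = j).card)
        (Finset.mem_range.mpr hj)
  -- bound on number of vertices of degree ≤ deg v
  have hA : ∀ v : V, (univ.filter fun u => G.degree u ≤ G.degree v).card
      ≤ (G.degree v - δ + 1) * r := by
    intro v
    have hsub : (univ.filter fun u => G.degree u ≤ G.degree v)
        ⊆ (Finset.Icc δ (G.degree v)).biUnion
          (fun j => univ.filter fun u => G.degree u = j) := by
      intro u hu
      simp only [mem_filter, mem_biUnion, Finset.mem_Icc] at *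
      exact ⟨G.degree u, ⟨hδle u, hu.2⟩, mem_univ u, rfl⟩
    calc (univ.filter fun u => G.degree u ≤ G.degree v).card
        ≤ ((Finset.Icc δ (G.degree v)).biUnion
            (fun j => univ.filter fun u => G.degree u = j)).card :=
          Finset.card_le_card hsub
      _ ≤ ∑ j ∈ Finset.Icc δ (G.degree v), (univ.filter fun u => G.degree u = j).card :=
          Finset.card_biUnion_le
      _ ≤ ∑ _j ∈ Finset.Icc δ (G.degree v), r := Finset.sum_le_sum fun j _ => hNle j
      _ = (G.degree v + 1 - δ) * r := by rw [Finset.sum_const, Nat.card_Icc, smul_eq_mul]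
      _ = (G.degree v - δ + 1) * r := by
          have := hδle v; congr 1; omega
  -- bound on number of vertices of degree < deg v
  have hB : ∀ v : V, (univ.filter fun u => G.degree u < G.degree v).card
      ≤ (G.degree v - δ) * r := by
    intro v
    have hsub : (univ.filter fun u => G.degree u < G.degree v)
        ⊆ (Finset.Ico δ (G.degree v)).biUnion
          (fun j => univ.filter fun u => G.degree u = j) := by
      intro u hu
      simp only [mem_filter, mem_biUnion, Finset.mem_Ico] at *
      exact ⟨G.degree u, ⟨hδle u, hu.2⟩, mem_univ u, rfl⟩
    calc (univ.filter fun u => G.degree u < G.degree v).card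
        ≤ ((Finset.Ico δ (G.degree v)).biUnion
            (fun j => univ.filter fun u => G.degree u = j)).card :=
          Finset.card_le_card hsub
      _ ≤ ∑ j ∈ Finset.Ico δ (G.degree v), (univ.filter fun u => G.degree u = j).card :=
          Finset.card_biUnion_le
      _ ≤ ∑ _j ∈ Finset.Ico δ (G.degree v), r := Finset.sum_le_sum fun j _ => hNle j
      _ = (G.degree v - δ) * r := by rw [Finset.sum_const, Nat.card_Ico, smul_eq_mul]
  -- the exact identity S + T = n²
  have hST : (∑ v : V, (univ.filter fun u => G.degree u ≤ G.degree v).card)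
      + (∑ v : V, (univ.filter fun u => G.degree u < G.degree v).card) = n * n := by
    have h2 : (∑ v : V, (univ.filter fun u => G.degree u < G.degree v).card)
        = ∑ v : V, (univ.filter fun u => G.degree v < G.degree u).card := by
      simp only [Finset.card_filter]
      rw [Finset.sum_comm]
    rw [h2, ← Finset.sum_add_distrib]
    have hpt : ∀ v : V, (univ.filter fun u => G.degree u ≤ G.degree v).card
        + (univ.filter fun u => G.degree v < G.degree u).card = n := by
      intro v
      have : (univ.filter fun u => G.degree v < G.degree u)
          = univ.filter fun u => ¬ (G.degree u ≤ G.degree v) := by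
        apply Finset.filter_congr; intro u _; simp [not_le]
      rw [this, Finset.card_filter_add_card_filter_not, Finset.card_univ]
    simp only [hpt, Finset.sum_const, Finset.card_univ, smul_eq_mul, ← hn]
  -- main natural-number inequality
  have hmain : n * n ≤ 2 * r * (∑ v : V, (G.degree v - δ)) + r * n := by
    have h1 : n * n ≤ ∑ v : V, ((G.degree v - δ + 1) * r + (G.degree v - δ) * r) := by
      rw [← hST, Finset.sum_add_distrib]
      exact Nat.add_le_add (Finset.sum_le_sum fun v _ => hA v)
        (Finset.sum_le_sum fun v _ => hB v)
    refine h1.trans_eq ?_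
    rw [Finset.sum_add_distrib, ← Finset.sum_mul, ← Finset.sum_mul,
      Finset.sum_add_distrib, Finset.sum_const, Finset.card_univ, smul_eq_mul]
    ring
  -- cast to the reals
  have hcast : ((∑ v : V, (G.degree v - δ) : ℕ) : ℝ)
      = (∑ v : V, (G.degree v : ℝ)) - (δ : ℝ) * n := by
    rw [Nat.cast_sum]
    have : ∀ v : V, ((G.degree v - δ : ℕ) : ℝ) = (G.degree v : ℝ) - (δ : ℝ) := by
      intro v; rw [Nat.cast_sub (hδle v)]
    rw [Finset.sum_congr rfl fun v _ => this v, Finset.sum_sub_distrib,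
      Finset.sum_const, Finset.card_univ, nsmul_eq_mul, mul_comm]
  have hn0R : (0 : ℝ) < n := by exact_mod_cast hn0
  have hSd : (δ : ℝ) * n ≤ ∑ v : V, (G.degree v : ℝ) := by
    rw [mul_comm]
    calc (n : ℝ) * δ = ∑ _v : V, (δ : ℝ) := by
          rw [Finset.sum_const, Finset.card_univ, nsmul_eq_mul]
      _ ≤ ∑ v : V, (G.degree v : ℝ) :=
          Finset.sum_le_sum fun v _ => by exact_mod_cast hδle v
  have hdn : d * n = ∑ v : V, (G.degree v : ℝ) := by
    rw [hd]; field_simp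
  have hdδ : (δ : ℝ) ≤ d := by
    rw [hd, le_div_iff₀ hn0R]; linarith [hSd]
  have hDpos : (0 : ℝ) < 2 * d - 2 * (δ : ℝ) + 1 := by linarith
  have hR : (n : ℝ) * n ≤ 2 * r * ((∑ v : V, (G.degree v : ℝ)) - (δ : ℝ) * n) + r * n := by
    have h1 : ((n : ℝ)) * n ≤ 2 * (r : ℝ) * (((∑ v : V, (G.degree v - δ) : ℕ)) : ℝ)
        + (r : ℝ) * n := by exact_mod_cast hmain
    rw [hcast] at h1
    exact h1
  rw [div_le_iff₀ hDpos]
  nlinarith [hR, hn0R, hdn]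
end

section
/- Let G be a k-tree on n = k + t + 2 vertices, where t ≥ 1 is an integer. Then the number of vertices of degree k + t in G is at most t + 1. -/
open Finset

/-- `G` is a `k`-tree: there is an enumeration of the vertices in which the first
`k+1` vertices form a clique and every later vertex has exactly `k` earlier
neighbors, which form a clique. -/
def IsKTree {V : Type*} [Fintype V] [DecidableEq V] (k : ℕ) (G : SimpleGraph V)
    [DecidableRel G.Adj] : Prop :=
  ∃ f : V ≃ Fin (Fintype.card V),
    (∀ u v : V, (f u : ℕ) < k + 1 → (f v : ℕ) < k + 1 → u ≠ v → G.Adj u v) ∧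
    (∀ v : V, k + 1 ≤ (f v : ℕ) →
      (univ.filter (fun u => G.Adj u v ∧ (f u : ℕ) < (f v : ℕ))).card = k ∧
      ∀ u w : V, G.Adj u v → G.Adj w v → (f u : ℕ) < (f v : ℕ) → (f w : ℕ) < (f v : ℕ) →
        u ≠ w → G.Adj u w)

section AuxKTree

variable {V : Type*} [Fintype V] [DecidableEq V] {k : ℕ} {G : SimpleGraph V} [DecidableRel G.Adj]

/-- A `k`-tree contains no clique with more than `k+1` vertices. -/
lemma ktree_no_big_clique (f : V ≃ Fin (Fintype.card V))
    (hstep1 : ∀ v : V, k + 1 ≤ (f v : ℕ) →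
      (univ.filter (fun u => G.Adj u v ∧ (f u : ℕ) < (f v : ℕ))).card = k)
    (T : Finset V) (hT : ∀ u ∈ T, ∀ w ∈ T, u ≠ w → G.Adj u w) :
    T.card ≤ k + 1 := by
  by_contra h
  push_neg at h
  have hne : T.Nonempty := by rw [← Finset.card_pos]; omega
  obtain ⟨w, hwT, hwmax⟩ := T.exists_max_image (fun u => (f u : ℕ)) hne
  by_cases hw : k + 1 ≤ (f w : ℕ)
  · have hsub : T.erase w ⊆ univ.filter (fun u => G.Adj u w ∧ (f u : ℕ) < (f w : ℕ)) := by
      intro u hu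
      rw [Finset.mem_erase] at hu
      simp only [Finset.mem_filter, Finset.mem_univ, true_and]
      refine ⟨hT u hu.2 w hwT hu.1, ?_⟩
      have h1 := hwmax u hu.2
      have h2 : (f u : ℕ) ≠ (f w : ℕ) := by
        intro hh
        exact hu.1 (f.injective (Fin.ext hh))
      omega
    have hle := Finset.card_le_card hsub
    rw [hstep1 w hw, Finset.card_erase_of_mem hwT] at hle
    omega
  · have hsub : T.image (fun u => (f u : ℕ)) ⊆ Finset.range (k + 1) := by
      intro i hi
      simp only [Finset.mem_image] at hi
      obtain ⟨u, hu, rfl⟩ := hi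
      rw [Finset.mem_range]
      have := hwmax u hu
      omega
    have h1 : (T.image (fun u => (f u : ℕ))).card = T.card :=
      Finset.card_image_of_injOn (fun x _ y _ hxy => f.injective (Fin.ext hxy))
    have hle := Finset.card_le_card hsub
    rw [h1, Finset.card_range] at hle
    omega

/-- Building a `(k+2)`-clique from the earlier neighbourhood of `x` together with
two extra vertices `v, v'` gives a contradiction. -/
lemma ktree_build (f : V ≃ Fin (Fintype.card V))
    (hstep : ∀ v : V, k + 1 ≤ (f v : ℕ) →
      (univ.filter (fun u => G.Adj u v ∧ (f u : ℕ) < (f v : ℕ))).card = k ∧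
      ∀ u w : V, G.Adj u v → G.Adj w v → (f u : ℕ) < (f v : ℕ) → (f w : ℕ) < (f v : ℕ) →
        u ≠ w → G.Adj u w)
    (x v v' : V) (hx : k + 1 ≤ (f x : ℕ)) (hvv' : v ≠ v') (hadj : G.Adj v v')
    (hvC : ∀ w, G.Adj w x → (f w : ℕ) < (f x : ℕ) → G.Adj v w)
    (hv'C : ∀ w, G.Adj w x → (f w : ℕ) < (f x : ℕ) → G.Adj v' w)
    (hvx : ¬ (G.Adj v x ∧ (f v : ℕ) < (f x : ℕ)))
    (hv'x : ¬ (G.Adj v' x ∧ (f v' : ℕ) < (f x : ℕ))) : False := by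
  classical
  set C := univ.filter (fun u => G.Adj u x ∧ (f u : ℕ) < (f x : ℕ)) with hCdef
  have hmemC : ∀ w, w ∈ C ↔ (G.Adj w x ∧ (f w : ℕ) < (f x : ℕ)) := by
    intro w; simp [hCdef]
  have hCcard : C.card = k := (hstep x hx).1
  have hvnot : v ∉ C := by rw [hmemC]; exact hvx
  have hv'not : v' ∉ C := by rw [hmemC]; exact hv'x
  have hT : ∀ p ∈ insert v (insert v' C), ∀ q ∈ insert v (insert v' C), p ≠ q → G.Adj p q := by
    intro p hp q hq hpq
    simp only [Finset.mem_insert] at hp hq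
    rcases hp with rfl | rfl | hp
    · rcases hq with rfl | rfl | hq
      · exact absurd rfl hpq
      · exact hadj
      · exact hvC q ((hmemC q).1 hq).1 ((hmemC q).1 hq).2
    · rcases hq with rfl | rfl | hq
      · exact hadj.symm
      · exact absurd rfl hpq
      · exact hv'C q ((hmemC q).1 hq).1 ((hmemC q).1 hq).2
    · rcases hq with rfl | rfl | hq
      · exact (hvC p ((hmemC p).1 hp).1 ((hmemC p).1 hp).2).symm
      · exact (hv'C p ((hmemC p).1 hp).1 ((hmemC p).1 hp).2).symm
      · exact (hstep x hx).2 p q ((hmemC p).1 hp).1 ((hmemC q).1 hq).1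
          ((hmemC p).1 hp).2 ((hmemC q).1 hq).2 hpq
  have hcard : (insert v (insert v' C)).card = k + 2 := by
    rw [Finset.card_insert_of_notMem (by simp [hvnot, hvv']),
      Finset.card_insert_of_notMem hv'not, hCcard]
  have := ktree_no_big_clique f (fun z hz => (hstep z hz).1) _ hT
  omega

/-- Two distinct vertices cannot both be adjacent to every vertex except a common
vertex `u` (core version, assuming `f v < f v'`). -/
lemma ktree_shared_core (f : V ≃ Fin (Fintype.card V))
    (hbase : ∀ u v : V, (f u : ℕ) < k + 1 → (f v : ℕ) < k + 1 → u ≠ v → G.Adj u v)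
    (hstep : ∀ v : V, k + 1 ≤ (f v : ℕ) →
      (univ.filter (fun u => G.Adj u v ∧ (f u : ℕ) < (f v : ℕ))).card = k ∧
      ∀ u w : V, G.Adj u v → G.Adj w v → (f u : ℕ) < (f v : ℕ) → (f w : ℕ) < (f v : ℕ) →
        u ≠ w → G.Adj u w)
    (u v v' : V)
    (hadj_uv : ¬ G.Adj u v) (hadj_uv' : ¬ G.Adj u v')
    (hvv' : v ≠ v') (hlt : (f v : ℕ) < (f v' : ℕ))
    (hv : ∀ w, w ≠ v → w ≠ u → G.Adj v w)
    (hv' : ∀ w, w ≠ v' → w ≠ u → G.Adj v' w) : False := by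
  have huv' : u ≠ v' := by
    rintro rfl
    exact hadj_uv (hv' v hvv' hvv')
  have huv : u ≠ v := by
    rintro rfl
    exact hadj_uv' (hv v' hvv'.symm (Ne.symm huv'))
  have hadjvv' : G.Adj v v' := hv v' hvv'.symm (Ne.symm huv')
  by_cases hu : k + 1 ≤ (f u : ℕ)
  · refine ktree_build f hstep u v v' hu hvv' hadjvv' ?_ ?_ ?_ ?_
    · intro w hw _
      refine hv w ?_ (G.ne_of_adj hw)
      rintro rfl
      exact hadj_uv hw.symm
    · intro w hw _
      refine hv' w ?_ (G.ne_of_adj hw)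
      rintro rfl
      exact hadj_uv' hw.symm
    · rintro ⟨h1, -⟩
      exact hadj_uv h1.symm
    · rintro ⟨h1, -⟩
      exact hadj_uv' h1.symm
  · push_neg at hu
    have hfv : k + 1 ≤ (f v : ℕ) := by
      by_contra hh
      push_neg at hh
      exact hadj_uv (hbase u v hu hh huv)
    refine ktree_build f hstep v v v' hfv hvv' hadjvv' ?_ ?_ ?_ ?_
    · intro w hw _
      exact hw.symm
    · intro w hw hltw
      refine hv' w ?_ ?_
      · rintro rfl
        omega
      · rintro rfl
        exact hadj_uv hw
    · rintro ⟨h1, -⟩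
      exact G.irrefl h1
    · rintro ⟨-, h2⟩
      omega

/-- Two distinct vertices cannot both be adjacent to every vertex except a common
vertex `u`. -/
lemma ktree_shared (f : V ≃ Fin (Fintype.card V))
    (hbase : ∀ u v : V, (f u : ℕ) < k + 1 → (f v : ℕ) < k + 1 → u ≠ v → G.Adj u v)
    (hstep : ∀ v : V, k + 1 ≤ (f v : ℕ) →
      (univ.filter (fun u => G.Adj u v ∧ (f u : ℕ) < (f v : ℕ))).card = k ∧
      ∀ u w : V, G.Adj u v → G.Adj w v → (f u : ℕ) < (f v : ℕ) → (f w : ℕ) < (f v : ℕ) →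
        u ≠ w → G.Adj u w)
    (u v v' : V)
    (hadj_uv : ¬ G.Adj u v) (hadj_uv' : ¬ G.Adj u v') (hvv' : v ≠ v')
    (hv : ∀ w, w ≠ v → w ≠ u → G.Adj v w)
    (hv' : ∀ w, w ≠ v' → w ≠ u → G.Adj v' w) : False := by
  rcases lt_trichotomy (f v : ℕ) (f v' : ℕ) with h | h | h
  · exact ktree_shared_core f hbase hstep u v v' hadj_uv hadj_uv' hvv' h hv hv'
  · exact hvv' (f.injective (Fin.ext h))
  · exact ktree_shared_core f hbase hstep u v' v hadj_uv' hadj_uv hvv'.symm h hv' hv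

/-- The number of non-neighbours of a vertex. -/
lemma ktree_nonadj_card (v : V) :
    (univ.filter (fun w => ¬ G.Adj v w ∧ w ≠ v)).card = Fintype.card V - 1 - G.degree v := by
  classical
  have hsplit := Finset.card_filter_add_card_filter_not
    (s := (univ : Finset V).erase v) (p := fun w => G.Adj v w)
  have h1 : ((univ : Finset V).erase v).filter (fun w => G.Adj v w) = G.neighborFinset v := by
    ext w
    simp only [Finset.mem_filter, Finset.mem_erase, Finset.mem_univ, true_and,
      SimpleGraph.mem_neighborFinset, and_true]
    constructor
    · exact fun h => h.2
    · intro h; exact ⟨(G.ne_of_adj h).symm, h⟩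
  have h2 : ((univ : Finset V).erase v).filter (fun w => ¬ G.Adj v w) =
      univ.filter (fun w => ¬ G.Adj v w ∧ w ≠ v) := by
    ext w
    simp only [Finset.mem_filter, Finset.mem_erase, Finset.mem_univ, true_and, and_true]
    tauto
  have h3 : ((univ : Finset V).erase v).card = Fintype.card V - 1 := by
    rw [Finset.card_erase_of_mem (Finset.mem_univ v), Finset.card_univ]
  rw [h1, h2, h3] at hsplit
  have h4 : (G.neighborFinset v).card = G.degree v := rfl
  omega

end AuxKTree

/-- In a `k`-tree on `n = k + t + 2` vertices (`t ≥ 1`), the number of vertices of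
degree `k + t` is at most `t + 1`. -/
theorem ktree_count_top_degree {V : Type*} [Fintype V] [DecidableEq V] (k t : ℕ)
    (ht : 1 ≤ t) (G : SimpleGraph V) [DecidableRel G.Adj] (hG : IsKTree k G)
    (hn : Fintype.card V = k + t + 2) :
    (univ.filter (fun v => G.degree v = k + t)).card ≤ t + 1 := by
  classical
  obtain ⟨f, hbase, hstep⟩ := hG
  have hnpos : 0 < Fintype.card V := by omega
  set a : V := f.symm ⟨Fintype.card V - 1, by omega⟩ with ha
  have hfa : (f a : ℕ) = Fintype.card V - 1 := by simp [ha]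
  have hlast : ∀ w : V, w ≠ a → (f w : ℕ) < (f a : ℕ) := by
    intro w hw
    have h1 : (f w : ℕ) < Fintype.card V := (f w).isLt
    have h2 : (f w : ℕ) ≠ Fintype.card V - 1 := by
      intro h
      exact hw (f.injective (Fin.ext (by rw [hfa, h])))
    omega
  have hka : k + 1 ≤ (f a : ℕ) := by omega
  -- the degree of the last vertex is `k`
  have hdeg_a : G.degree a = k := by
    rw [← (hstep a hka).1]
    have : univ.filter (fun u => G.Adj u a ∧ (f u : ℕ) < (f a : ℕ)) = G.neighborFinset a := by
      ext u
      simp only [Finset.mem_filter, Finset.mem_univ, true_and, SimpleGraph.mem_neighborFinset]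
      constructor
      · intro h; exact h.1.symm
      · intro h
        exact ⟨h.symm, hlast u (G.ne_of_adj h).symm⟩
    rw [this]
    rfl
  -- the set of non-neighbours of `a`
  set M : Finset V := univ.filter (fun w => ¬ G.Adj a w ∧ w ≠ a) with hM
  have hMcard : M.card = t + 1 := by
    rw [hM, ktree_nonadj_card a, hdeg_a]
    omega
  -- non-neighbour sets of degree-(k+t) vertices
  set nn : V → Finset V := fun v => univ.filter (fun w => ¬ G.Adj v w ∧ w ≠ v) with hnn
  have hnn1 : ∀ v : V, G.degree v = k + t → (nn v).card = 1 := by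
    intro v hv
    rw [hnn]
    simp only
    rw [ktree_nonadj_card v, hv]
    omega
  set Φ : V → V := fun v =>
    if G.Adj v a then (if h : (nn v).Nonempty then h.choose else v) else v with hΦ
  -- for a degree-(k+t) vertex adjacent to a, Φ v is its unique non-neighbour
  have hΦspec : ∀ v : V, G.degree v = k + t → G.Adj v a →
      (¬ G.Adj v (Φ v) ∧ Φ v ≠ v ∧ ∀ w, ¬ G.Adj v w → w ≠ v → w = Φ v) := by
    intro v hv hva
    obtain ⟨b, hb⟩ := Finset.card_eq_one.mp (hnn1 v hv)
    have hbne : (nn v).Nonempty := by rw [hb]; exact ⟨b, Finset.mem_singleton_self b⟩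
    have hmin : Φ v = b := by
      have h1 : Φ v ∈ nn v := by
        simp only [hΦ]
        rw [if_pos hva, dif_pos hbne]
        exact hbne.choose_spec
      rw [hb, Finset.mem_singleton] at h1
      exact h1
    have hbmem : b ∈ nn v := by rw [hb]; exact Finset.mem_singleton_self b
    rw [hnn] at hbmem
    simp only [Finset.mem_filter, Finset.mem_univ, true_and] at hbmem
    refine ⟨by rw [hmin]; exact hbmem.1, by rw [hmin]; exact hbmem.2, ?_⟩
    intro w hw1 hw2
    have : w ∈ nn v := by
      rw [hnn]; simp only [Finset.mem_filter, Finset.mem_univ, true_and]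
      exact ⟨hw1, hw2⟩
    rw [hb, Finset.mem_singleton] at this
    rw [this, hmin]
  have hanotS : ∀ v : V, G.degree v = k + t → v ≠ a := by
    intro v hv hva
    rw [hva, hdeg_a] at hv
    omega
  -- Φ maps the degree-(k+t) vertices into M
  have hmaps : ∀ v ∈ univ.filter (fun v => G.degree v = k + t), Φ v ∈ M := by
    intro v hv
    rw [Finset.mem_filter] at hv
    have hdv := hv.2
    by_cases hva : G.Adj v a
    · obtain ⟨h1, h2, h3⟩ := hΦspec v hdv hva
      rw [hM]
      simp only [Finset.mem_filter, Finset.mem_univ, true_and]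
      have hΦa : Φ v ≠ a := by
        intro h
        rw [h] at h1
        exact h1 hva
      refine ⟨?_, hΦa⟩
      intro hadj
      -- Φ v and v are both neighbours of a, hence adjacent (a is simplicial)
      have hva' : G.Adj v a := hva
      have hΦva : G.Adj (Φ v) a := hadj.symm
      have := (hstep a hka).2 (Φ v) v hΦva hva' (hlast _ hΦa) (hlast _ (hanotS v hdv))
        (by intro h; exact h2 h)
      exact h1 this.symm
    · rw [hΦ]
      simp only [hva, if_false]
      rw [hM]
      simp only [Finset.mem_filter, Finset.mem_univ, true_and]
      exact ⟨fun h => hva h.symm, hanotS v hdv⟩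
  -- Φ is injective on the degree-(k+t) vertices
  have hinj : Set.InjOn Φ (univ.filter (fun v => G.degree v = k + t)) := by
    intro v hv v' hv' heq
    simp only [Finset.coe_filter, Set.mem_setOf_eq] at hv hv'
    have hdv := hv.2
    have hdv' := hv'.2
    by_contra hne
    by_cases hva : G.Adj v a <;> by_cases hv'a : G.Adj v' a
    · -- both adjacent to a: shared unique non-neighbour
      obtain ⟨h1, h2, h3⟩ := hΦspec v hdv hva
      obtain ⟨h1', h2', h3'⟩ := hΦspec v' hdv' hv'a
      set u := Φ v with hu
      have hu' : Φ v' = u := heq.symm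
      refine ktree_shared f hbase hstep u v v' (fun h => h1 h.symm)
        (fun h => h1' (by rw [hu']; exact h.symm)) hne ?_ ?_
      · intro w hw1 hw2
        by_contra hadj
        exact hw2 (h3 w hadj hw1)
      · intro w hw1 hw2
        by_contra hadj
        refine hw2 ?_
        rw [← hu']
        exact h3' w hadj hw1
    · -- v adjacent to a, v' not: then Φ v' = v', and Φ v = v' is a non-neighbour of v
      obtain ⟨h1, h2, h3⟩ := hΦspec v hdv hva
      have hΦv' : Φ v' = v' := by rw [hΦ]; simp only [hv'a, if_false]
      rw [hΦv'] at heq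
      -- v' has two distinct non-neighbours: a and v
      have hv'nea : v' ≠ a := hanotS v' hdv'
      obtain ⟨b, hb⟩ := Finset.card_eq_one.mp (hnn1 v' hdv')
      have hamem : a ∈ nn v' := by
        rw [hnn]; simp only [Finset.mem_filter, Finset.mem_univ, true_and]
        exact ⟨fun h => hv'a h, hv'nea.symm⟩
      have hvmem : v ∈ nn v' := by
        rw [hnn]; simp only [Finset.mem_filter, Finset.mem_univ, true_and]
        refine ⟨?_, fun h => hne h⟩
        intro h
        rw [← heq] at h
        exact h1 h.symm
      rw [hb, Finset.mem_singleton] at hamem hvmem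
      have : v = a := by rw [hvmem, ← hamem]
      exact hanotS v hdv this
    · -- symmetric case
      obtain ⟨h1', h2', h3'⟩ := hΦspec v' hdv' hv'a
      have hΦv : Φ v = v := by rw [hΦ]; simp only [hva, if_false]
      rw [hΦv] at heq
      have hvnea : v ≠ a := hanotS v hdv
      obtain ⟨b, hb⟩ := Finset.card_eq_one.mp (hnn1 v hdv)
      have hamem : a ∈ nn v := by
        rw [hnn]; simp only [Finset.mem_filter, Finset.mem_univ, true_and]
        exact ⟨fun h => hva h, hvnea.symm⟩
      have hvmem : v' ∈ nn v := by
        rw [hnn]; simp only [Finset.mem_filter, Finset.mem_univ, true_and]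
        refine ⟨?_, fun h => hne h.symm⟩
        intro h
        rw [heq] at h
        exact h1' h.symm
      rw [hb, Finset.mem_singleton] at hamem hvmem
      have : v' = a := by rw [hvmem, ← hamem]
      exact hanotS v' hdv' this
    · have hΦv : Φ v = v := by rw [hΦ]; simp only [hva, if_false]
      have hΦv' : Φ v' = v' := by rw [hΦ]; simp only [hv'a, if_false]
      rw [hΦv, hΦv'] at heq
      exact hne heq
  have := Finset.card_le_card_of_injOn Φ hmaps hinj
  omega
end

section
/- Let G be a k-tree on n ≥ k + t + 2 vertices, where t ≥ 0 is an integer. Then the subgraph of G induced by the vertices of degree k + t has chromatic number at most (t² + t + 2)/2. -/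
open Finset

namespace KTreeAux

variable {V : Type*} [Fintype V] [DecidableEq V]

/-- staged degree: number of neighbors among the first `i` vertices. -/
def sdeg (G : SimpleGraph V) [DecidableRel G.Adj] (f : V ≃ Fin (Fintype.card V))
    (i : ℕ) (v : V) : ℕ :=
  (univ.filter (fun u => G.Adj u v ∧ (f u : ℕ) < i)).card

/-- clique as a finset with pairwise adjacency -/
def Clq (G : SimpleGraph V) (K : Finset V) : Prop :=
  ∀ u ∈ K, ∀ w ∈ K, u ≠ w → G.Adj u w

section Basic

variable {G : SimpleGraph V} [DecidableRel G.Adj] (f : V ≃ Fin (Fintype.card V))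

lemma ord_inj {u v : V} (h : (f u : ℕ) = (f v : ℕ)) : u = v :=
  f.injective (Fin.val_injective h)

lemma ord_eq_iff {u : V} {i : ℕ} (hi : i < Fintype.card V) :
    (f u : ℕ) = i ↔ u = f.symm ⟨i, hi⟩ := by
  constructor
  · intro h
    have : f u = ⟨i, hi⟩ := Fin.ext h
    rw [← this]; simp
  · intro h; subst h; simp

lemma card_ord_lt_le (i : ℕ) :
    (univ.filter (fun v : V => (f v : ℕ) < i)).card ≤ i := by
  have : (univ.filter (fun v : V => (f v : ℕ) < i)).card ≤ (Finset.range i).card := by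
    apply Finset.card_le_card_of_injOn (fun v => (f v : ℕ))
    · intro v hv
      simp only [Finset.mem_coe, mem_filter] at hv
      simpa using hv.2
    · intro a _ b _ h
      exact ord_inj f h
  simpa using this

lemma card_ord_lt_eq (i : ℕ) (hi : i ≤ Fintype.card V) :
    (univ.filter (fun v : V => (f v : ℕ) < i)).card = i := by
  have h : (univ.filter (fun v : V => (f v : ℕ) < i)).card = (Finset.range i).card := by
    refine Finset.card_nbij (fun v => (f v : ℕ)) ?_ ?_ ?_
    · intro a ha
      simp only [Finset.mem_coe, mem_filter] at ha
      simpa using ha.2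
    · intro a _ b _ h
      exact ord_inj f h
    · intro m hm
      simp only [Finset.coe_range, Set.mem_Iio] at hm
      have hmn : m < Fintype.card V := lt_of_lt_of_le hm hi
      refine ⟨f.symm ⟨m, hmn⟩, ?_, by simp⟩
      simp only [Finset.coe_filter, Set.mem_setOf_eq, mem_univ, true_and,
        Equiv.apply_symm_apply]
      exact hm
  rw [h, Finset.card_range]

lemma sdeg_mono {i j : ℕ} (hij : i ≤ j) (v : V) : sdeg G f i v ≤ sdeg G f j v := by
  apply Finset.card_le_card
  intro u hu
  simp only [mem_filter] at hu ⊢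
  exact ⟨hu.1, hu.2.1, lt_of_lt_of_le hu.2.2 hij⟩

lemma sdeg_succ (i : ℕ) (hi : i < Fintype.card V) (v : V) :
    sdeg G f (i + 1) v
      = sdeg G f i v + if G.Adj (f.symm ⟨i, hi⟩) v then 1 else 0 := by
  set z := f.symm ⟨i, hi⟩ with hz
  by_cases hadj : G.Adj z v
  · rw [if_pos hadj]
    have hset : univ.filter (fun u : V => G.Adj u v ∧ (f u : ℕ) < i + 1)
        = insert z (univ.filter (fun u : V => G.Adj u v ∧ (f u : ℕ) < i)) := by
      ext u
      simp only [mem_filter, mem_univ, true_and, mem_insert]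
      constructor
      · rintro ⟨ha, hlt⟩
        rcases Nat.lt_succ_iff_lt_or_eq.mp hlt with h | h
        · exact Or.inr ⟨ha, h⟩
        · exact Or.inl ((ord_eq_iff f hi).mp h)
      · rintro (rfl | ⟨ha, hlt⟩)
        · exact ⟨hadj, by simp [hz]⟩
        · exact ⟨ha, by omega⟩
    have hznotmem : z ∉ univ.filter (fun u : V => G.Adj u v ∧ (f u : ℕ) < i) := by
      simp [hz]
    simp only [sdeg]
    rw [hset, Finset.card_insert_of_notMem hznotmem]
  · rw [if_neg hadj]
    have hset : univ.filter (fun u : V => G.Adj u v ∧ (f u : ℕ) < i + 1)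
        = univ.filter (fun u : V => G.Adj u v ∧ (f u : ℕ) < i) := by
      ext u
      simp only [mem_filter, mem_univ, true_and]
      constructor
      · rintro ⟨ha, hlt⟩
        refine ⟨ha, ?_⟩
        rcases Nat.lt_succ_iff_lt_or_eq.mp hlt with h | h
        · exact h
        · have hu : u = f.symm ⟨i, hi⟩ := (ord_eq_iff f hi).mp h
          rw [hu] at ha
          rw [hz] at hadj
          exact absurd ha hadj
      · rintro ⟨ha, hlt⟩
        exact ⟨ha, by omega⟩
    simp only [sdeg]
    rw [hset]
    omega

lemma sdeg_eq_degree (v : V) : sdeg G f (Fintype.card V) v = G.degree v := by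
  have hset : univ.filter (fun u : V => G.Adj u v ∧ (f u : ℕ) < Fintype.card V)
      = G.neighborFinset v := by
    ext u
    simp only [mem_filter, mem_univ, true_and, SimpleGraph.mem_neighborFinset]
    constructor
    · rintro ⟨h, _⟩; exact h.symm
    · intro h; exact ⟨h.symm, (f u).2⟩
  simp only [sdeg]
  rw [hset, SimpleGraph.degree]

/-- a vertex with staged degree `i - 1` is adjacent to all earlier vertices -/
lemma universal_adj {i : ℕ} (hi : i ≤ Fintype.card V) {v : V} (hvi : (f v : ℕ) < i)
    (hd : sdeg G f i v = i - 1) :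
    ∀ w : V, (f w : ℕ) < i → w ≠ v → G.Adj w v := by
  have hsub : univ.filter (fun u : V => G.Adj u v ∧ (f u : ℕ) < i)
      ⊆ (univ.filter (fun u : V => (f u : ℕ) < i)).erase v := by
    intro u hu
    simp only [mem_filter, mem_univ, true_and] at hu
    exact Finset.mem_erase.mpr ⟨G.ne_of_adj hu.1, by simp [hu.2]⟩
  have hvmem : v ∈ univ.filter (fun u : V => (f u : ℕ) < i) := by simp [hvi]
  have hcard : ((univ.filter (fun u : V => (f u : ℕ) < i)).erase v).card = i - 1 := by
    rw [Finset.card_erase_of_mem hvmem, card_ord_lt_eq f i hi]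
  have heq : univ.filter (fun u : V => G.Adj u v ∧ (f u : ℕ) < i)
      = (univ.filter (fun u : V => (f u : ℕ) < i)).erase v := by
    apply Finset.eq_of_subset_of_card_le hsub
    rw [hcard, ← hd]
    simp only [sdeg]
    exact le_rfl
  intro w hw hwv
  have : w ∈ (univ.filter (fun u : V => (f u : ℕ) < i)).erase v :=
    Finset.mem_erase.mpr ⟨hwv, by simp [hw]⟩
  rw [← heq] at this
  simp only [mem_filter] at this
  exact this.2.1

end Basic

section WithHyp

variable {k : ℕ} {G : SimpleGraph V} [DecidableRel G.Adj] (f : V ≃ Fin (Fintype.card V))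
variable (hf1 : ∀ u v : V, (f u : ℕ) < k + 1 → (f v : ℕ) < k + 1 → u ≠ v → G.Adj u v)
variable (hf2 : ∀ v : V, k + 1 ≤ (f v : ℕ) →
      (univ.filter (fun u => G.Adj u v ∧ (f u : ℕ) < (f v : ℕ))).card = k ∧
      ∀ u w : V, G.Adj u v → G.Adj w v → (f u : ℕ) < (f v : ℕ) → (f w : ℕ) < (f v : ℕ) →
        u ≠ w → G.Adj u w)

include hf2 in
/-- every clique has at most `k+1` vertices -/
lemma clq_card_le {K : Finset V} (hK : Clq G K) : K.card ≤ k + 1 := by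
  rcases K.eq_empty_or_nonempty with rfl | hne
  · simp
  · obtain ⟨v, hv, hmax⟩ := K.exists_max_image (fun u => (f u : ℕ)) hne
    by_cases hc : k + 1 ≤ (f v : ℕ)
    · have hsub : K.erase v ⊆ univ.filter (fun u => G.Adj u v ∧ (f u : ℕ) < (f v : ℕ)) := by
        intro u hu
        rw [Finset.mem_erase] at hu
        simp only [mem_filter, mem_univ, true_and]
        refine ⟨hK u hu.2 v hv hu.1, lt_of_le_of_ne (hmax u hu.2) ?_⟩
        intro h
        exact hu.1 (ord_inj f h)
      have := Finset.card_le_card hsub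
      rw [(hf2 v hc).1] at this
      have hcard := Finset.card_erase_of_mem hv
      omega
    · push_neg at hc
      have hsub : K ⊆ univ.filter (fun u : V => (f u : ℕ) < k + 1) := by
        intro u hu
        simp only [mem_filter, mem_univ, true_and]
        exact lt_of_le_of_lt (hmax u hu) hc
      exact le_trans (Finset.card_le_card hsub) (card_ord_lt_le f (k + 1))

include hf1 hf2 in
/-- universal vertex count: at stage `i` there are at least `2k+2-i` universal vertices. -/
lemma ucount : ∀ i : ℕ, k + 1 ≤ i → i ≤ Fintype.card V →
    2 * k + 2 ≤ (univ.filter (fun v : V => (f v : ℕ) < i ∧ sdeg G f i v = i - 1)).card + i := by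
  intro i
  induction i with
  | zero => omega
  | succ i ih =>
    intro hki hin
    simp only [Nat.add_sub_cancel]
    rcases Nat.lt_or_ge (k + 1) (i + 1) with hlt | hge
    -- inductive step : k + 1 ≤ i
    · have hki' : k + 1 ≤ i := by omega
      have hin' : i ≤ Fintype.card V := by omega
      have hIH := ih hki' hin'
      have hiV : i < Fintype.card V := by omega
      set z := f.symm ⟨i, hiV⟩ with hz
      have hordz : (f z : ℕ) = i := by simp [hz]
      set U := univ.filter (fun v : V => (f v : ℕ) < i ∧ sdeg G f i v = i - 1) with hU
      set U' := univ.filter (fun v : V => (f v : ℕ) < i + 1 ∧ sdeg G f (i + 1) v = i) with hU'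
      have hWsub : U.filter (fun v => G.Adj z v) ⊆ U' := by
        intro v hv
        simp only [hU, hU', mem_filter, mem_univ, true_and] at hv ⊢
        obtain ⟨⟨hvi, hvd⟩, hadj⟩ := hv
        refine ⟨by omega, ?_⟩
        rw [sdeg_succ f i hiV v, ← hz, if_pos hadj, hvd]
        omega
      have hmiss : (U.filter (fun v => ¬ G.Adj z v)).card ≤ 1 := by
        rw [Finset.card_le_one]
        intro a ha b hb
        by_contra hab
        simp only [hU, mem_filter, mem_univ, true_and] at ha hb
        obtain ⟨⟨hai, had⟩, hanadj⟩ := ha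
        obtain ⟨⟨hbi, hbd⟩, hbnadj⟩ := hb
        -- build a clique of size k+2
        set B := univ.filter (fun u => G.Adj u z ∧ (f u : ℕ) < (f z : ℕ)) with hB
        have hBcard : B.card = k := (hf2 z (by omega)).1
        have hBclq : ∀ u ∈ B, ∀ w ∈ B, u ≠ w → G.Adj u w := by
          intro u hu w hw huw
          simp only [hB, mem_filter, mem_univ, true_and] at hu hw
          exact (hf2 z (by omega)).2 u w hu.1 hw.1 hu.2 hw.2 huw
        have hBi : ∀ c ∈ B, (f c : ℕ) < i := by
          intro c hc
          simp only [hB, mem_filter, mem_univ, true_and] at hc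
          omega
        have haB : a ∉ B := by
          simp only [hB, mem_filter, mem_univ, true_and]
          rintro ⟨hadj', _⟩
          exact hanadj hadj'.symm
        have hbB : b ∉ B := by
          simp only [hB, mem_filter, mem_univ, true_and]
          rintro ⟨hadj', _⟩
          exact hbnadj hadj'.symm
        have hadj_ab : G.Adj a b := universal_adj f hin' hbi hbd a hai hab
        have hadj_aB : ∀ c ∈ B, G.Adj c a := by
          intro c hc
          exact universal_adj f hin' hai had c (hBi c hc) (by rintro rfl; exact haB hc)
        have hadj_bB : ∀ c ∈ B, G.Adj c b := by
          intro c hc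
          exact universal_adj f hin' hbi hbd c (hBi c hc) (by rintro rfl; exact hbB hc)
        have hKclq : Clq G (insert a (insert b B)) := by
          intro u hu w hw huw
          simp only [Finset.mem_insert] at hu hw
          rcases hu with hua | hub | huB <;> rcases hw with hwa | hwb | hwB
          · exact absurd (hua.trans hwa.symm) huw
          · rw [hua, hwb]; exact hadj_ab
          · rw [hua]; exact (hadj_aB w hwB).symm
          · rw [hub, hwa]; exact hadj_ab.symm
          · exact absurd (hub.trans hwb.symm) huw
          · rw [hub]; exact (hadj_bB w hwB).symm
          · rw [hwa]; exact hadj_aB u huB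
          · rw [hwb]; exact hadj_bB u huB
          · exact hBclq u huB w hwB huw
        have hcard : (insert a (insert b B)).card = k + 2 := by
          rw [Finset.card_insert_of_notMem, Finset.card_insert_of_notMem hbB, hBcard]
          simp only [Finset.mem_insert]
          push_neg
          exact ⟨hab, haB⟩
        have := clq_card_le f hf2 hKclq
        omega
      have hsplit : (U.filter (fun v => G.Adj z v)).card
          + (U.filter (fun v => ¬ G.Adj z v)).card = U.card :=
        Finset.card_filter_add_card_filter_not _
      have hWle := Finset.card_le_card hWsub
      omega
    -- base case : i + 1 = k + 1
    · have hik : i + 1 = k + 1 := by omega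
      have hsub : univ.filter (fun v : V => (f v : ℕ) < i + 1)
          ⊆ univ.filter (fun v : V => (f v : ℕ) < i + 1 ∧ sdeg G f (i + 1) v = i) := by
        intro v hv
        simp only [mem_filter, mem_univ, true_and] at hv ⊢
        refine ⟨hv, le_antisymm ?_ ?_⟩
        · have hsub2 : univ.filter (fun u : V => G.Adj u v ∧ (f u : ℕ) < i + 1)
              ⊆ (univ.filter (fun u : V => (f u : ℕ) < i + 1)).erase v := by
            intro u hu
            simp only [mem_filter, mem_univ, true_and] at hu
            exact Finset.mem_erase.mpr ⟨G.ne_of_adj hu.1, by simp [Nat.lt_add_one_iff.mp hu.2]⟩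
          have h1 := Finset.card_le_card hsub2
          have h2 : ((univ.filter (fun u : V => (f u : ℕ) < i + 1)).erase v).card = i := by
            rw [Finset.card_erase_of_mem (by simp [Nat.lt_add_one_iff.mp hv]), card_ord_lt_eq f (i + 1) hin]
            omega
          rw [h2] at h1
          exact h1
        · have hsub3 : (univ.filter (fun u : V => (f u : ℕ) < i + 1)).erase v
              ⊆ univ.filter (fun u : V => G.Adj u v ∧ (f u : ℕ) < i + 1) := by
            intro u hu
            rw [Finset.mem_erase] at hu
            obtain ⟨huv, hu2⟩ := hu
            simp only [mem_filter, mem_univ, true_and] at hu2 ⊢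
            exact ⟨hf1 u v (by omega) (by omega) huv, hu2⟩
          have h1 := Finset.card_le_card hsub3
          have h2 : ((univ.filter (fun u : V => (f u : ℕ) < i + 1)).erase v).card = i := by
            rw [Finset.card_erase_of_mem (by simp [Nat.lt_add_one_iff.mp hv]), card_ord_lt_eq f (i + 1) hin]
            omega
          rw [h2] at h1
          exact h1
      have h3 := Finset.card_le_card hsub
      rw [card_ord_lt_eq f (i + 1) hin] at h3
      omega

include hf1 hf2 in
/-- every clique inside `V_i` extends to a `(k+1)`-clique inside `V_i`. -/
lemma clq_extend (i : ℕ) (hki : k + 1 ≤ i) (hin : i ≤ Fintype.card V)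
    {Q : Finset V} (hQ : Clq G Q) (hQi : ∀ v ∈ Q, (f v : ℕ) < i) :
    ∃ K : Finset V, Clq G K ∧ K.card = k + 1 ∧ Q ⊆ K ∧ ∀ v ∈ K, (f v : ℕ) < i := by
  by_cases hc : ∀ v ∈ Q, (f v : ℕ) < k + 1
  · refine ⟨univ.filter (fun v : V => (f v : ℕ) < k + 1), ?_, ?_, ?_, ?_⟩
    · intro u hu w hw huw
      simp only [mem_filter, mem_univ, true_and] at hu hw
      exact hf1 u w hu hw huw
    · exact card_ord_lt_eq f (k + 1) (le_trans hki hin)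
    · intro v hv
      simp only [mem_filter, mem_univ, true_and]
      exact hc v hv
    · intro v hv
      simp only [mem_filter, mem_univ, true_and] at hv
      omega
  · push_neg at hc
    obtain ⟨v0, hv0Q, hv0⟩ := hc
    have hne : Q.Nonempty := ⟨v0, hv0Q⟩
    obtain ⟨q, hq, hmax⟩ := Q.exists_max_image (fun u => (f u : ℕ)) hne
    have hqk : k + 1 ≤ (f q : ℕ) := le_trans hv0 (hmax v0 hv0Q)
    set B := univ.filter (fun u => G.Adj u q ∧ (f u : ℕ) < (f q : ℕ)) with hB
    have hBcard : B.card = k := (hf2 q hqk).1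
    have hqB : q ∉ B := by
      simp only [hB, mem_filter, mem_univ, true_and]
      rintro ⟨hadj, _⟩
      exact G.irrefl hadj
    refine ⟨insert q B, ?_, ?_, ?_, ?_⟩
    · intro u hu w hw huw
      simp only [Finset.mem_insert] at hu hw
      rcases hu with rfl | huB <;> rcases hw with rfl | hwB
      · exact absurd rfl huw
      · simp only [hB, mem_filter, mem_univ, true_and] at hwB
        exact hwB.1.symm
      · simp only [hB, mem_filter, mem_univ, true_and] at huB
        exact huB.1
      · simp only [hB, mem_filter, mem_univ, true_and] at huB hwB
        exact (hf2 q hqk).2 u w huB.1 hwB.1 huB.2 hwB.2 huw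
    · rw [Finset.card_insert_of_notMem hqB, hBcard]
    · intro u hu
      rcases eq_or_ne u q with rfl | huq
      · exact Finset.mem_insert_self _ _
      · apply Finset.mem_insert_of_mem
        simp only [hB, mem_filter, mem_univ, true_and]
        refine ⟨hQ u hu q hq huq, lt_of_le_of_ne (hmax u hu) ?_⟩
        intro h
        exact huq (ord_inj f h)
    · intro u hu
      simp only [Finset.mem_insert] at hu
      rcases hu with rfl | huB
      · exact hQi u hq
      · simp only [hB, mem_filter, mem_univ, true_and] at huB
        exact lt_trans huB.2 (hQi q hq)

include hf1 hf2 in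
/-- key lemma: in any `(k+1)`-clique within the first `i` vertices, at most `t+1`
members have staged degree at most `k+t`, provided `i ≥ k+t+2`. -/
lemma main_bound : ∀ i : ℕ, i ≤ Fintype.card V → ∀ t : ℕ, ∀ K : Finset V, Clq G K →
    K.card = k + 1 → (∀ v ∈ K, (f v : ℕ) < i) → k + t + 2 ≤ i →
    (K.filter (fun v => sdeg G f i v ≤ k + t)).card ≤ t + 1 := by
  intro i
  induction i using Nat.strong_induction_on with
  | _ i IH =>
  intro hin t K hK hKc hKi hti
  rcases eq_or_lt_of_le hti with heq | hlt
  · -- base case i = k + t + 2 : use universal vertices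
    set U := univ.filter (fun v : V => (f v : ℕ) < i ∧ sdeg G f i v = i - 1) with hU
    have hUcount := ucount f hf1 hf2 i (by omega) hin
    rw [← hU] at hUcount
    have hUK : U ⊆ K := by
      intro u hu
      simp only [hU, mem_filter, mem_univ, true_and] at hu
      obtain ⟨hui, hud⟩ := hu
      by_contra hnot
      have hclq : Clq G (insert u K) := by
        intro a ha b hb hab
        simp only [Finset.mem_insert] at ha hb
        rcases ha with rfl | haK <;> rcases hb with rfl | hbK
        · exact absurd rfl hab
        · exact (universal_adj f hin hui hud b (hKi b hbK) (by rintro rfl; exact hnot hbK)).symm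
        · exact universal_adj f hin hui hud a (hKi a haK) (by rintro rfl; exact hnot haK)
        · exact hK a haK b hbK hab
      have hcard : (insert u K).card = k + 2 := by
        rw [Finset.card_insert_of_notMem hnot, hKc]
      have := clq_card_le f hf2 hclq
      omega
    have hdisj : Disjoint (K.filter (fun v => sdeg G f i v ≤ k + t)) U := by
      rw [Finset.disjoint_left]
      intro a ha haU
      simp only [mem_filter] at ha
      simp only [hU, mem_filter, mem_univ, true_and] at haU
      omega
    have hunion : (K.filter (fun v => sdeg G f i v ≤ k + t)) ∪ U ⊆ K :=
      Finset.union_subset (Finset.filter_subset _ _) hUK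
    have hcard := Finset.card_le_card hunion
    rw [Finset.card_union_of_disjoint hdisj, hKc] at hcard
    omega
  · -- inductive step
    obtain ⟨i', rfl⟩ : ∃ i', i = i' + 1 := ⟨i - 1, by omega⟩
    have hi'n : i' < Fintype.card V := by omega
    set z := f.symm ⟨i', hi'n⟩ with hz
    have hordz : (f z : ℕ) = i' := by simp [hz]
    have hKi' : ∀ v ∈ K, v ≠ z → (f v : ℕ) < i' := by
      intro v hv hvz
      have h1 := hKi v hv
      have h2 : (f v : ℕ) ≠ i' := by
        intro h
        exact hvz ((ord_eq_iff f hi'n).mp h)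
      omega
    by_cases hzK : z ∈ K
    · -- the last vertex z is in K
      have herase : ∀ v ∈ K.erase z, G.Adj z v ∧ (f v : ℕ) < i' := by
        intro v hv
        rw [Finset.mem_erase] at hv
        exact ⟨(hK v hv.2 z hzK hv.1).symm, hKi' v hv.2 hv.1⟩
      rcases Nat.eq_zero_or_pos t with rfl | htpos
      · -- t = 0
        have hsub : K.filter (fun v => sdeg G f (i' + 1) v ≤ k + 0) ⊆ {z} := by
          intro v hv
          simp only [mem_filter] at hv
          obtain ⟨hvK, hvd⟩ := hv
          rw [Finset.mem_singleton]
          by_contra hvz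
          have hvz' : v ∈ K.erase z := Finset.mem_erase.mpr ⟨hvz, hvK⟩
          obtain ⟨hadj, hlt'⟩ := herase v hvz'
          have hmin : k ≤ sdeg G f i' v := by
            by_cases hc : k + 1 ≤ (f v : ℕ)
            · have hsubB : univ.filter (fun u => G.Adj u v ∧ (f u : ℕ) < (f v : ℕ))
                  ⊆ univ.filter (fun u => G.Adj u v ∧ (f u : ℕ) < i') := by
                intro u hu
                simp only [mem_filter, mem_univ, true_and] at hu ⊢
                exact ⟨hu.1, by omega⟩
              have h1 := Finset.card_le_card hsubB
              rw [(hf2 v hc).1] at h1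
              exact h1
            · push_neg at hc
              have hsubB : (univ.filter (fun u : V => (f u : ℕ) < k + 1)).erase v
                  ⊆ univ.filter (fun u => G.Adj u v ∧ (f u : ℕ) < i') := by
                intro u hu
                rw [Finset.mem_erase] at hu
                obtain ⟨huv, hu2⟩ := hu
                simp only [mem_filter, mem_univ, true_and] at hu2 ⊢
                refine ⟨hf1 u v hu2 hc huv, by omega⟩
              have h1 := Finset.card_le_card hsubB
              have h2 : ((univ.filter (fun u : V => (f u : ℕ) < k + 1)).erase v).card = k := by
                rw [Finset.card_erase_of_mem (by simp [Nat.lt_add_one_iff.mp hc]), card_ord_lt_eq f (k + 1) (by omega)]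
                omega
              rw [h2] at h1
              exact h1
          have hstep : sdeg G f (i' + 1) v = sdeg G f i' v + 1 := by
            rw [sdeg_succ f i' hi'n v, ← hz, if_pos hadj]
          omega
        have := Finset.card_le_card hsub
        simpa using this
      · -- t ≥ 1
        obtain ⟨t', rfl⟩ : ∃ t', t = t' + 1 := ⟨t - 1, by omega⟩
        have hQclq : Clq G (K.erase z) := by
          intro u hu w hw huw
          exact hK u (Finset.mem_of_mem_erase hu) w (Finset.mem_of_mem_erase hw) huw
        obtain ⟨K'', hK''clq, hK''card, hK''sub, hK''i⟩ :=
          clq_extend f hf1 hf2 i' (by omega) (by omega) hQclq (fun v hv => (herase v hv).2)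
        have hIH := IH i' (by omega) (by omega) t' K'' hK''clq hK''card hK''i (by omega)
        have hsub : K.filter (fun v => sdeg G f (i' + 1) v ≤ k + (t' + 1))
            ⊆ insert z (K''.filter (fun v => sdeg G f i' v ≤ k + t')) := by
          intro v hv
          simp only [mem_filter] at hv
          obtain ⟨hvK, hvd⟩ := hv
          rcases eq_or_ne v z with rfl | hvz
          · exact Finset.mem_insert_self _ _
          · apply Finset.mem_insert_of_mem
            have hvz' : v ∈ K.erase z := Finset.mem_erase.mpr ⟨hvz, hvK⟩
            obtain ⟨hadj, hlt'⟩ := herase v hvz'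
            have hstep : sdeg G f (i' + 1) v = sdeg G f i' v + 1 := by
              rw [sdeg_succ f i' hi'n v, ← hz, if_pos hadj]
            simp only [mem_filter]
            exact ⟨hK''sub hvz', by omega⟩
        have h1 := Finset.card_le_card hsub
        have h2 := Finset.card_insert_le z (K''.filter (fun v => sdeg G f i' v ≤ k + t'))
        omega
    · -- z ∉ K
      have hsub : K.filter (fun v => sdeg G f (i' + 1) v ≤ k + t)
          ⊆ K.filter (fun v => sdeg G f i' v ≤ k + t) := by
        intro v hv
        simp only [mem_filter] at hv ⊢
        exact ⟨hv.1, le_trans (sdeg_mono f (by omega) v) hv.2⟩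
      have hIH := IH i' (by omega) (by omega) t K hK hKc
        (fun v hv => hKi' v hv (by rintro rfl; exact hzK hv)) (by omega)
      exact le_trans (Finset.card_le_card hsub) hIH

include hf1 hf2 in
/-- every clique all of whose vertices have degree exactly `k+t` has at most `t+1` vertices -/
lemma clique_S_bound (t : ℕ) (hn : k + t + 2 ≤ Fintype.card V)
    {C : Finset V} (hC : Clq G C) (hCS : ∀ v ∈ C, G.degree v = k + t) :
    C.card ≤ t + 1 := by
  obtain ⟨K, hKclq, hKcard, hCK, _⟩ :=
    clq_extend f hf1 hf2 (Fintype.card V) (by omega) le_rfl hC (fun v _ => (f v).2)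
  have hsub : C ⊆ K.filter (fun v => sdeg G f (Fintype.card V) v ≤ k + t) := by
    intro v hv
    simp only [mem_filter]
    refine ⟨hCK hv, ?_⟩
    rw [sdeg_eq_degree f v, hCS v hv]
  exact le_trans (Finset.card_le_card hsub)
    (main_bound f hf1 hf2 (Fintype.card V) le_rfl t K hKclq hKcard (fun v _ => (f v).2) hn)

include hf1 hf2 in
/-- greedy coloring along the construction order -/
lemma greedy (t : ℕ) (hn : k + t + 2 ≤ Fintype.card V) :
    ∃ g : V → Fin (t + 1), ∀ u v : V, G.degree u = k + t → G.degree v = k + t →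
      G.Adj u v → g u ≠ g v := by
  suffices h : ∀ m : ℕ, ∃ g : V → Fin (t + 1), ∀ u v : V, G.degree u = k + t →
      G.degree v = k + t → G.Adj u v → (f u : ℕ) < m → (f v : ℕ) < m → g u ≠ g v by
    obtain ⟨g, hg⟩ := h (Fintype.card V)
    exact ⟨g, fun u v h1 h2 h3 => hg u v h1 h2 h3 (f u).2 (f v).2⟩
  intro m
  induction m with
  | zero =>
    refine ⟨fun _ => ⟨0, by omega⟩, ?_⟩
    intro u v _ _ _ h
    omega
  | succ m ih =>
    obtain ⟨g, hg⟩ := ih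
    by_cases hmn : m < Fintype.card V
    · set z := f.symm ⟨m, hmn⟩ with hz
      have hordz : (f z : ℕ) = m := by simp [hz]
      by_cases hzS : G.degree z = k + t
      · set E := univ.filter (fun u : V => G.degree u = k + t ∧ G.Adj u z ∧ (f u : ℕ) < m)
          with hE
        have hEz : z ∉ E := by
          simp only [hE, mem_filter, mem_univ, true_and]
          rintro ⟨_, hadj, _⟩
          exact G.irrefl hadj
        have hEclq : Clq G (insert z E) := by
          intro u hu w hw huw
          simp only [Finset.mem_insert] at hu hw
          rcases hu with rfl | huE <;> rcases hw with rfl | hwE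
          · exact absurd rfl huw
          · simp only [hE, mem_filter, mem_univ, true_and] at hwE
            exact hwE.2.1.symm
          · simp only [hE, mem_filter, mem_univ, true_and] at huE
            exact huE.2.1
          · simp only [hE, mem_filter, mem_univ, true_and] at huE hwE
            by_cases hc : k + 1 ≤ (f z : ℕ)
            · exact (hf2 z hc).2 u w huE.2.1 hwE.2.1 (by omega) (by omega) huw
            · push_neg at hc
              exact hf1 u w (by omega) (by omega) huw
        have hEcard : E.card ≤ t := by
          have hdegs : ∀ v ∈ insert z E, G.degree v = k + t := by
            intro v hv
            simp only [Finset.mem_insert] at hv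
            rcases hv with rfl | hvE
            · exact hzS
            · simp only [hE, mem_filter, mem_univ, true_and] at hvE
              exact hvE.1
          have := clique_S_bound f hf1 hf2 t hn hEclq hdegs
          rw [Finset.card_insert_of_notMem hEz] at this
          omega
        obtain ⟨κ, hκ⟩ : ∃ κ : Fin (t + 1), κ ∉ E.image g := by
          by_contra hcon
          push_neg at hcon
          have : (univ : Finset (Fin (t + 1))) ⊆ E.image g := fun κ _ => hcon κ
          have h1 := Finset.card_le_card this
          have h2 := Finset.card_image_le (s := E) (f := g)
          simp only [Finset.card_univ, Fintype.card_fin] at h1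
          omega
        refine ⟨Function.update g z κ, ?_⟩
        intro u v hu hv hadj hum hvm
        have hne := G.ne_of_adj hadj
        by_cases huz : u = z <;> by_cases hvz : v = z
        · subst huz; subst hvz; exact absurd rfl hne
        · subst huz
          have hvm' : (f v : ℕ) < m := by
            have : (f v : ℕ) ≠ m := fun h => hvz ((ord_eq_iff f hmn).mp h)
            omega
          have hvE : v ∈ E := by
            simp only [hE, mem_filter, mem_univ, true_and]
            exact ⟨hv, hadj.symm, hvm'⟩
          rw [Function.update_self, Function.update_of_ne hvz]
          intro h
          exact hκ (h ▸ Finset.mem_image_of_mem g hvE)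
        · subst hvz
          have hum' : (f u : ℕ) < m := by
            have : (f u : ℕ) ≠ m := fun h => huz ((ord_eq_iff f hmn).mp h)
            omega
          have huE : u ∈ E := by
            simp only [hE, mem_filter, mem_univ, true_and]
            exact ⟨hu, hadj, hum'⟩
          rw [Function.update_self, Function.update_of_ne huz]
          intro h
          exact hκ (h ▸ Finset.mem_image_of_mem g huE)
        · have hum' : (f u : ℕ) < m := by
            have : (f u : ℕ) ≠ m := fun h => huz ((ord_eq_iff f hmn).mp h)
            omega
          have hvm' : (f v : ℕ) < m := by
            have : (f v : ℕ) ≠ m := fun h => hvz ((ord_eq_iff f hmn).mp h)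
            omega
          rw [Function.update_of_ne huz, Function.update_of_ne hvz]
          exact hg u v hu hv hadj hum' hvm'
      · refine ⟨g, ?_⟩
        intro u v hu hv hadj hum hvm
        have hum' : (f u : ℕ) < m := by
          have : (f u : ℕ) ≠ m := by
            intro h
            rw [(ord_eq_iff f hmn).mp h] at hu
            exact hzS hu
          omega
        have hvm' : (f v : ℕ) < m := by
          have : (f v : ℕ) ≠ m := by
            intro h
            rw [(ord_eq_iff f hmn).mp h] at hv
            exact hzS hv
          omega
        exact hg u v hu hv hadj hum' hvm'
    · refine ⟨g, ?_⟩
      intro u v hu hv hadj hum hvm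
      exact hg u v hu hv hadj (by have := (f u).2; omega) (by have := (f v).2; omega)

end WithHyp

end KTreeAux

/-- In a `k`-tree on `n ≥ k + t + 2` vertices (`t ≥ 0`), the subgraph induced by the
vertices of degree `k + t` has chromatic number at most `(t² + t + 2)/2`. -/
theorem ktree_chromatic_degree_class {V : Type*} [Fintype V] [DecidableEq V] (k t : ℕ)
    (G : SimpleGraph V) [DecidableRel G.Adj] (hG : IsKTree k G)
    (hn : k + t + 2 ≤ Fintype.card V) :
    (G.induce {v : V | G.degree v = k + t}).chromaticNumber
      ≤ (((t ^ 2 + t + 2) / 2 : ℕ) : ℕ∞) := by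
  classical
  obtain ⟨f, hf1, hf2⟩ := hG
  obtain ⟨g, hg⟩ := KTreeAux.greedy f hf1 hf2 t hn
  have hcol : (G.induce {v : V | G.degree v = k + t}).Colorable (t + 1) := by
    refine ⟨SimpleGraph.Coloring.mk (fun v => g v.1) ?_⟩
    intro a b hab
    have hadj : G.Adj a.1 b.1 := hab
    exact hg a.1 b.1 a.2 b.2 hadj
  have h1 : (G.induce {v : V | G.degree v = k + t}).chromaticNumber ≤ (t + 1 : ℕ) :=
    hcol.chromaticNumber_le
  refine le_trans h1 ?_
  have harith : t + 1 ≤ (t ^ 2 + t + 2) / 2 := by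
    have h2 : (t + 1) * 2 ≤ t ^ 2 + t + 2 := by nlinarith
    exact (Nat.le_div_iff_mul_le (by omega)).mpr h2
  exact_mod_cast Nat.cast_le.mpr harith
end

section
/- Let G be a k-tree on n ≥ k + t + 2 vertices, where t ≥ 0 is an integer. Then the subgraph of G induced by the vertices of degree exactly k + t is (t² + t)/2-degenerate. -/
open Finset

section KTreeAux

variable {V : Type*} [Fintype V] [DecidableEq V] {k t : ℕ} {G : SimpleGraph V}
  [DecidableRel G.Adj]

private lemma fval_inj (f : V ≃ Fin (Fintype.card V)) {a b : V}
    (h : (f a : ℕ) = (f b : ℕ)) : a = b :=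
  f.injective (Fin.val_injective h)

/-- A `k`-tree has no clique on `k+2` vertices. -/
private lemma no_big_clique (f : V ≃ Fin (Fintype.card V))
    (hb : ∀ v : V, k + 1 ≤ (f v : ℕ) →
      (univ.filter (fun u => G.Adj u v ∧ (f u : ℕ) < (f v : ℕ))).card = k)
    (K : Finset V) (hK : ∀ a ∈ K, ∀ b ∈ K, a ≠ b → G.Adj a b) : K.card ≤ k + 1 := by
  by_contra hlt
  push_neg at hlt
  have hne : K.Nonempty := card_pos.mp (by omega)
  obtain ⟨m, hmK, hmax⟩ := K.exists_max_image (fun a => (f a : ℕ)) hne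
  by_cases hm : (f m : ℕ) < k + 1
  · have himg : K.image (fun a => (f a : ℕ)) ⊆ Finset.range (k + 1) := by
      intro x hx
      simp only [mem_image] at hx
      obtain ⟨a, ha, rfl⟩ := hx
      exact mem_range.mpr (lt_of_le_of_lt (hmax a ha) hm)
    have hcard := card_le_card himg
    rw [Finset.card_image_of_injective _ (fun a b h => fval_inj f h), card_range] at hcard
    omega
  · push_neg at hm
    have hsub : K.erase m ⊆ univ.filter (fun u => G.Adj u m ∧ (f u : ℕ) < (f m : ℕ)) := by
      intro a ha
      rw [mem_erase] at ha
      simp only [mem_filter, mem_univ, true_and]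
      exact ⟨hK a ha.2 m hmK ha.1,
        lt_of_le_of_ne (hmax a ha.2) (fun h => ha.1 (fval_inj f h))⟩
    have hcard := card_le_card hsub
    rw [hb m hm, card_erase_of_mem hmK] at hcard
    omega

private lemma card_lows (f : V ≃ Fin (Fintype.card V)) (hkV : k + 1 ≤ Fintype.card V) :
    (univ.filter (fun z : V => (f z : ℕ) < k + 1)).card = k + 1 := by
  have himg : (univ.filter (fun z : V => (f z : ℕ) < k + 1)).image (fun z => ((f z : ℕ)))
      = Finset.range (k + 1) := by
    ext x
    simp only [mem_image, mem_filter, mem_univ, true_and, mem_range]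
    constructor
    · rintro ⟨z, hz, rfl⟩; exact hz
    · intro hx
      have hlt : x < Fintype.card V := lt_of_lt_of_le hx hkV
      refine ⟨f.symm ⟨x, hlt⟩, ?_, ?_⟩
      · rw [Equiv.apply_symm_apply]; exact hx
      · rw [Equiv.apply_symm_apply]
  have h := congrArg Finset.card himg
  rwa [Finset.card_image_of_injective _ (fun a b h => fval_inj f h), card_range] at h

private lemma card_highs (f : V ≃ Fin (Fintype.card V)) (hkV : k + 1 ≤ Fintype.card V) :
    (univ.filter (fun z : V => k + 1 ≤ (f z : ℕ))).card = Fintype.card V - (k + 1) := by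
  have h := Finset.card_filter_add_card_filter_not
    (s := (univ : Finset V)) (p := fun z : V => (f z : ℕ) < k + 1)
  have he : (univ.filter (fun z : V => ¬ (f z : ℕ) < k + 1))
      = (univ.filter (fun z : V => k + 1 ≤ (f z : ℕ))) := by
    apply filter_congr
    intro z _
    simp [not_lt]
  rw [he, card_lows f hkV, card_univ] at h
  omega

private lemma degree_eq_filter (w : V) : G.degree w = (univ.filter (G.Adj w)).card := by
  rw [← SimpleGraph.neighborFinset_eq_filter]
  rfl

/-- A vertex with index `≥ k+1` and degree `k+t` has exactly `t` later neighbors. -/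
private lemma count_high_of_high (f : V ≃ Fin (Fintype.card V))
    (hb : ∀ v : V, k + 1 ≤ (f v : ℕ) →
      (univ.filter (fun u => G.Adj u v ∧ (f u : ℕ) < (f v : ℕ))).card = k)
    (w : V) (hw : k + 1 ≤ (f w : ℕ)) (hdeg : G.degree w = k + t) :
    (univ.filter (fun z => G.Adj w z ∧ (f w : ℕ) < (f z : ℕ))).card = t := by
  have h := Finset.card_filter_add_card_filter_not
    (s := univ.filter (G.Adj w)) (p := fun z : V => (f z : ℕ) < (f w : ℕ))
  rw [filter_filter, filter_filter] at h
  have he1 : (univ.filter (fun z => G.Adj w z ∧ (f z : ℕ) < (f w : ℕ)))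
      = (univ.filter (fun u => G.Adj u w ∧ (f u : ℕ) < (f w : ℕ))) := by
    apply filter_congr
    intro z _
    simp [G.adj_comm]
  have he2 : (univ.filter (fun z => G.Adj w z ∧ ¬ (f z : ℕ) < (f w : ℕ)))
      = (univ.filter (fun z => G.Adj w z ∧ (f w : ℕ) < (f z : ℕ))) := by
    apply filter_congr
    intro z _
    constructor
    · rintro ⟨hadj, hnlt⟩
      refine ⟨hadj, lt_of_le_of_ne (not_lt.mp hnlt) ?_⟩
      exact fun hh => hadj.ne (fval_inj f hh)
    · rintro ⟨hadj, hlt⟩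
      exact ⟨hadj, by omega⟩
  rw [he1, he2, hb w hw, ← degree_eq_filter, hdeg] at h
  omega

/-- A vertex in the initial clique with degree `k+t` has exactly `t` high neighbors. -/
private lemma count_high_of_low (f : V ≃ Fin (Fintype.card V))
    (h1 : ∀ u v : V, (f u : ℕ) < k + 1 → (f v : ℕ) < k + 1 → u ≠ v → G.Adj u v)
    (hkV : k + 1 ≤ Fintype.card V)
    (w : V) (hw : (f w : ℕ) < k + 1) (hdeg : G.degree w = k + t) :
    (univ.filter (fun z => G.Adj w z ∧ k + 1 ≤ (f z : ℕ))).card = t := by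
  have h := Finset.card_filter_add_card_filter_not
    (s := univ.filter (G.Adj w)) (p := fun z : V => (f z : ℕ) < k + 1)
  rw [filter_filter, filter_filter] at h
  have he2 : (univ.filter (fun z => G.Adj w z ∧ ¬ (f z : ℕ) < k + 1))
      = (univ.filter (fun z => G.Adj w z ∧ k + 1 ≤ (f z : ℕ))) := by
    apply filter_congr
    intro z _
    simp [not_lt]
  have he1 : (univ.filter (fun z => G.Adj w z ∧ (f z : ℕ) < k + 1))
      = (univ.filter (fun z : V => (f z : ℕ) < k + 1)).erase w := by
    ext z
    simp only [mem_filter, mem_univ, true_and, mem_erase]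
    constructor
    · rintro ⟨hadj, hz⟩
      exact ⟨hadj.ne', hz⟩
    · rintro ⟨hzw, hz⟩
      exact ⟨h1 w z hw hz (Ne.symm hzw), hz⟩
  have hwmem : w ∈ univ.filter (fun z : V => (f z : ℕ) < k + 1) := by
    simp [hw]
    omega
  rw [he1, he2, card_erase_of_mem hwmem, card_lows f hkV, ← degree_eq_filter, hdeg] at h
  omega

/-- Key step: at most one vertex of `W0` is a non-neighbor of the minimal high
vertex outside `B`. -/
private lemma one_step (f : V ≃ Fin (Fintype.card V))
    (h1 : ∀ u v : V, (f u : ℕ) < k + 1 → (f v : ℕ) < k + 1 → u ≠ v → G.Adj u v)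
    (hb : ∀ v : V, k + 1 ≤ (f v : ℕ) →
      (univ.filter (fun u => G.Adj u v ∧ (f u : ℕ) < (f v : ℕ))).card = k)
    (hc : ∀ v : V, k + 1 ≤ (f v : ℕ) → ∀ u w : V, G.Adj u v → G.Adj w v →
      (f u : ℕ) < (f v : ℕ) → (f w : ℕ) < (f v : ℕ) → u ≠ w → G.Adj u w)
    (B W0 : Finset V)
    (hlow : ∀ w ∈ W0, (f w : ℕ) < k + 1)
    (hadjB : ∀ w ∈ W0, ∀ z ∈ B, G.Adj w z)
    (z : V) (hzhigh : k + 1 ≤ (f z : ℕ)) (hzB : z ∉ B)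
    (hzmin : ∀ z' ∈ univ.filter (fun y : V => k + 1 ≤ (f y : ℕ) ∧ y ∉ B),
      (f z : ℕ) ≤ (f z' : ℕ)) :
    (W0.filter (fun w => ¬ G.Adj w z)).card ≤ 1 := by
  rw [card_le_one]
  intro a ha b hb'
  simp only [mem_filter] at ha hb'
  obtain ⟨haW, hanadj⟩ := ha
  obtain ⟨hbW, hbnadj⟩ := hb'
  by_contra hab
  set Cz := univ.filter (fun u => G.Adj u z ∧ (f u : ℕ) < (f z : ℕ)) with hCz
  have hCzcard : Cz.card = k := hb z hzhigh
  have hCz_adj_all : ∀ w, w ∈ W0 → ¬ G.Adj w z → ∀ u ∈ Cz, G.Adj w u := by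
    intro w hwW hwnadj u hu
    simp only [hCz, mem_filter, mem_univ, true_and] at hu
    obtain ⟨huz, hufz⟩ := hu
    have hwu : w ≠ u := fun h => hwnadj (h ▸ huz)
    by_cases hulow : (f u : ℕ) < k + 1
    · exact h1 w u (hlow w hwW) hulow hwu
    · push_neg at hulow
      have huB : u ∈ B := by
        by_contra huB
        have hmem : u ∈ univ.filter (fun y : V => k + 1 ≤ (f y : ℕ) ∧ y ∉ B) := by
          simp [hulow, huB]
          omega
        have := hzmin u hmem
        omega
      exact hadjB w hwW u huB
  have haCz : a ∉ Cz := by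
    intro h
    simp only [hCz, mem_filter, mem_univ, true_and] at h
    exact hanadj h.1
  have hbCz : b ∉ Cz := by
    intro h
    simp only [hCz, mem_filter, mem_univ, true_and] at h
    exact hbnadj h.1
  set K := insert a (insert b Cz) with hKdef
  have hKcard : K.card = k + 2 := by
    rw [hKdef, card_insert_of_notMem, card_insert_of_notMem hbCz, hCzcard]
    simp only [mem_insert]
    push_neg
    exact ⟨hab, haCz⟩
  have hKclique : ∀ x ∈ K, ∀ y ∈ K, x ≠ y → G.Adj x y := by
    intro x hx y hy hxy
    simp only [hKdef, mem_insert] at hx hy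
    have hCzmem : ∀ u ∈ Cz, G.Adj u z ∧ (f u : ℕ) < (f z : ℕ) := by
      intro u hu
      simpa only [hCz, mem_filter, mem_univ, true_and] using hu
    rcases hx with rfl | hx
    · rcases hy with rfl | hy
      · exact absurd rfl hxy
      · rcases hy with rfl | hy
        · exact h1 x y (hlow x haW) (hlow y hbW) hxy
        · exact hCz_adj_all x haW hanadj y hy
    · rcases hx with rfl | hx
      · rcases hy with rfl | hy
        · exact (h1 y x (hlow y haW) (hlow x hbW) (Ne.symm hxy)).symm
        · rcases hy with rfl | hy
          · exact absurd rfl hxy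
          · exact hCz_adj_all x hbW hbnadj y hy
      · rcases hy with rfl | hy
        · exact (hCz_adj_all y haW hanadj x hx).symm
        · rcases hy with rfl | hy
          · exact (hCz_adj_all y hbW hbnadj x hx).symm
          · obtain ⟨hxz, hxfz⟩ := hCzmem x hx
            obtain ⟨hyz, hyfz⟩ := hCzmem y hy
            exact hc z hzhigh x y hxz hyz hxfz hyfz hxy
  have := no_big_clique f hb K hKclique
  omega

/-- Main inductive lemma: a set of initial vertices, all adjacent to a common set
`B` of high vertices and each with at most `s` high neighbors outside `B`, has at
most `s + 1` elements, provided there are at least `s + 1` high vertices outside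
`B`. -/
private lemma key_lemma (f : V ≃ Fin (Fintype.card V))
    (h1 : ∀ u v : V, (f u : ℕ) < k + 1 → (f v : ℕ) < k + 1 → u ≠ v → G.Adj u v)
    (hb : ∀ v : V, k + 1 ≤ (f v : ℕ) →
      (univ.filter (fun u => G.Adj u v ∧ (f u : ℕ) < (f v : ℕ))).card = k)
    (hc : ∀ v : V, k + 1 ≤ (f v : ℕ) → ∀ u w : V, G.Adj u v → G.Adj w v →
      (f u : ℕ) < (f v : ℕ) → (f w : ℕ) < (f v : ℕ) → u ≠ w → G.Adj u w) :
    ∀ s : ℕ, ∀ B W0 : Finset V,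
      (∀ w ∈ W0, (f w : ℕ) < k + 1) →
      (∀ w ∈ W0, ∀ z ∈ B, G.Adj w z) →
      (∀ w ∈ W0, (univ.filter (fun z => G.Adj w z ∧ k + 1 ≤ (f z : ℕ) ∧ z ∉ B)).card ≤ s) →
      s + 1 ≤ (univ.filter (fun z : V => k + 1 ≤ (f z : ℕ) ∧ z ∉ B)).card →
      W0.card ≤ s + 1 := by
  intro s
  induction s with
  | zero =>
    intro B W0 hlow hadjB hcount hHB
    have hne : (univ.filter (fun z : V => k + 1 ≤ (f z : ℕ) ∧ z ∉ B)).Nonempty :=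
      card_pos.mp (by omega)
    obtain ⟨z, hz, hzmin⟩ := Finset.exists_min_image _ (fun y => (f y : ℕ)) hne
    have hz' := hz
    simp only [mem_filter, mem_univ, true_and] at hz'
    have hone := one_step f h1 hb hc B W0 hlow hadjB z hz'.1 hz'.2 hzmin
    have hempty : W0.filter (fun w => G.Adj w z) = ∅ := by
      rw [filter_eq_empty_iff]
      intro w hw hadj
      have hzc : z ∈ univ.filter (fun y => G.Adj w y ∧ k + 1 ≤ (f y : ℕ) ∧ y ∉ B) := by
        simp only [mem_filter, mem_univ, true_and]
        exact ⟨hadj, hz'.1, hz'.2⟩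
      have hpos : 0 < (univ.filter (fun y => G.Adj w y ∧ k + 1 ≤ (f y : ℕ) ∧ y ∉ B)).card :=
        card_pos.mpr ⟨z, hzc⟩
      have := hcount w hw
      omega
    have hsplit := Finset.card_filter_add_card_filter_not
      (s := W0) (p := fun w => G.Adj w z)
    rw [hempty] at hsplit
    simp only [card_empty] at hsplit
    omega
  | succ s ih =>
    intro B W0 hlow hadjB hcount hHB
    have hne : (univ.filter (fun z : V => k + 1 ≤ (f z : ℕ) ∧ z ∉ B)).Nonempty :=
      card_pos.mp (by omega)
    obtain ⟨z, hz, hzmin⟩ := Finset.exists_min_image _ (fun y => (f y : ℕ)) hne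
    have hz' := hz
    simp only [mem_filter, mem_univ, true_and] at hz'
    obtain ⟨hzhigh, hzB⟩ := hz'
    have hone := one_step f h1 hb hc B W0 hlow hadjB z hzhigh hzB hzmin
    set W0' := W0.filter (fun w => G.Adj w z) with hW0'
    set B' := insert z B with hB'
    have hlow' : ∀ w ∈ W0', (f w : ℕ) < k + 1 :=
      fun w hw => hlow w (filter_subset _ _ hw)
    have hadjB' : ∀ w ∈ W0', ∀ y ∈ B', G.Adj w y := by
      intro w hw y hy
      rcases mem_insert.mp hy with rfl | hyB
      · exact (mem_filter.mp hw).2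
      · exact hadjB w (filter_subset _ _ hw) y hyB
    have hcount' : ∀ w ∈ W0',
        (univ.filter (fun y => G.Adj w y ∧ k + 1 ≤ (f y : ℕ) ∧ y ∉ B')).card ≤ s := by
      intro w hw
      have hwW0 : w ∈ W0 := filter_subset _ _ hw
      have hwz : G.Adj w z := (mem_filter.mp hw).2
      have hins : insert z (univ.filter (fun y => G.Adj w y ∧ k + 1 ≤ (f y : ℕ) ∧ y ∉ B'))
          ⊆ univ.filter (fun y => G.Adj w y ∧ k + 1 ≤ (f y : ℕ) ∧ y ∉ B) := by
        intro y hy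
        rcases mem_insert.mp hy with rfl | hy
        · simp only [mem_filter, mem_univ, true_and]
          exact ⟨hwz, hzhigh, hzB⟩
        · simp only [mem_filter, mem_univ, true_and] at hy ⊢
          exact ⟨hy.1, hy.2.1, fun hBB => hy.2.2 (mem_insert_of_mem hBB)⟩
      have hznot : z ∉ univ.filter (fun y => G.Adj w y ∧ k + 1 ≤ (f y : ℕ) ∧ y ∉ B') := by
        simp only [mem_filter, mem_univ, true_and, not_and, not_not]
        intro _ _
        exact mem_insert_self z B
      have hcard := card_le_card hins
      rw [card_insert_of_notMem hznot] at hcard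
      have := hcount w hwW0
      omega
    have hHB' : s + 1 ≤ (univ.filter (fun y : V => k + 1 ≤ (f y : ℕ) ∧ y ∉ B')).card := by
      have hsub : (univ.filter (fun y : V => k + 1 ≤ (f y : ℕ) ∧ y ∉ B))
          ⊆ insert z (univ.filter (fun y : V => k + 1 ≤ (f y : ℕ) ∧ y ∉ B')) := by
        intro y hy
        simp only [mem_filter, mem_univ, true_and] at hy
        by_cases hyz : y = z
        · subst hyz
          exact mem_insert_self y _
        · refine mem_insert_of_mem ?_
          simp only [mem_filter, mem_univ, true_and]
          refine ⟨hy.1, fun hyB' => ?_⟩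
          rcases mem_insert.mp hyB' with rfl | hh
          · exact hyz rfl
          · exact hy.2 hh
      have hcard := card_le_card hsub
      have := card_insert_le z (univ.filter (fun y : V => k + 1 ≤ (f y : ℕ) ∧ y ∉ B'))
      omega
    have hW0'card := ih B' W0' hlow' hadjB' hcount' hHB'
    have hsplit := Finset.card_filter_add_card_filter_not
      (s := W0) (p := fun w => G.Adj w z)
    rw [← hW0'] at hsplit
    omega

end KTreeAux

/-- In a `k`-tree on `n ≥ k + t + 2` vertices (`t ≥ 0`), the subgraph induced by the
vertices of degree `k + t` is `(t² + t)/2`-degenerate: every nonempty set of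
degree-`(k+t)` vertices contains a vertex with at most `(t² + t)/2` neighbors in it. -/
theorem ktree_degree_class_degenerate {V : Type*} [Fintype V] [DecidableEq V] (k t : ℕ)
    (G : SimpleGraph V) [DecidableRel G.Adj] (hG : IsKTree k G)
    (hn : k + t + 2 ≤ Fintype.card V) :
    ∀ S : Finset V, (∀ v ∈ S, G.degree v = k + t) → S.Nonempty →
      ∃ v ∈ S, (S.filter (G.Adj v)).card ≤ (t ^ 2 + t) / 2 := by
  obtain ⟨f, h1, h2⟩ := hG
  have hb : ∀ v : V, k + 1 ≤ (f v : ℕ) →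
      (univ.filter (fun u => G.Adj u v ∧ (f u : ℕ) < (f v : ℕ))).card = k :=
    fun v hv => (h2 v hv).1
  have hc : ∀ v : V, k + 1 ≤ (f v : ℕ) → ∀ u w : V, G.Adj u v → G.Adj w v →
      (f u : ℕ) < (f v : ℕ) → (f w : ℕ) < (f v : ℕ) → u ≠ w → G.Adj u w :=
    fun v hv => (h2 v hv).2
  have hkV : k + 1 ≤ Fintype.card V := by omega
  intro S hdeg hS
  obtain ⟨v, hvS, hvmax⟩ := S.exists_max_image (fun u => (f u : ℕ)) hS
  refine ⟨v, hvS, ?_⟩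
  set A := S.filter (G.Adj v) with hA
  have ht2 : t ≤ (t ^ 2 + t) / 2 := by
    rw [Nat.le_div_iff_mul_le (by norm_num : (0:ℕ) < 2)]
    nlinarith [Nat.le_self_pow (two_ne_zero) t]
  suffices h : A.card ≤ t by omega
  have hAfv : ∀ u ∈ A, (f u : ℕ) < (f v : ℕ) := by
    intro u hu
    rw [hA, mem_filter] at hu
    have hne : u ≠ v := hu.2.ne'
    exact lt_of_le_of_ne (hvmax u hu.1) (fun h => hne (fval_inj f h))
  have hvA : v ∉ A := by
    intro h
    exact G.loopless.irrefl v (mem_filter.mp h).2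
  set W := insert v A with hW
  have hWS : ∀ w ∈ W, w ∈ S := by
    intro w hw
    rcases mem_insert.mp hw with rfl | h
    · exact hvS
    · exact (mem_filter.mp h).1
  have hWdeg : ∀ w ∈ W, G.degree w = k + t := fun w hw => hdeg w (hWS w hw)
  have hWadj : ∀ a ∈ W, ∀ b ∈ W, a ≠ b → G.Adj a b := by
    intro a ha b hb' hab
    rcases mem_insert.mp ha with rfl | haA
    · rcases mem_insert.mp hb' with rfl | hbA
      · exact absurd rfl hab
      · exact (mem_filter.mp hbA).2
    · rcases mem_insert.mp hb' with rfl | hbA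
      · exact ((mem_filter.mp haA).2).symm
      · have hfa := hAfv a haA
        have hfb := hAfv b hbA
        by_cases hv : k + 1 ≤ (f v : ℕ)
        · exact hc v hv a b (mem_filter.mp haA).2.symm (mem_filter.mp hbA).2.symm
            hfa hfb hab
        · push_neg at hv
          exact h1 a b (by omega) (by omega) hab
  have hcardW : W.card = A.card + 1 := card_insert_of_notMem hvA
  set W0 := W.filter (fun w => (f w : ℕ) < k + 1) with hW0
  set W1 := W.filter (fun w => ¬ (f w : ℕ) < k + 1) with hW1
  have hsplitW := Finset.card_filter_add_card_filter_not
    (s := W) (p := fun w => (f w : ℕ) < k + 1)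
  rw [← hW0, ← hW1] at hsplitW
  have hniceW1 : ∀ z ∈ W1, k + 1 ≤ (f z : ℕ) := by
    intro z hz
    have := (mem_filter.mp hz).2
    omega
  by_cases hW0e : W0 = ∅
  · -- all of W is high; bound via later neighbors of the minimal element
    rw [hW0e] at hsplitW
    simp only [card_empty, zero_add] at hsplitW
    have hW1ne : W1.Nonempty := by
      rw [← card_pos]
      have hWpos : 0 < W.card := card_pos.mpr ⟨v, mem_insert_self v A⟩
      omega
    obtain ⟨w, hwW1, hwmin⟩ := W1.exists_min_image (fun u => (f u : ℕ)) hW1ne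
    have hwhigh : k + 1 ≤ (f w : ℕ) := hniceW1 w hwW1
    have hwW : w ∈ W := (mem_filter.mp hwW1).1
    have hsub : W1.erase w ⊆ univ.filter (fun z => G.Adj w z ∧ (f w : ℕ) < (f z : ℕ)) := by
      intro y hy
      rw [mem_erase] at hy
      have hyW : y ∈ W := (mem_filter.mp hy.2).1
      simp only [mem_filter, mem_univ, true_and]
      refine ⟨hWadj w hwW y hyW (Ne.symm hy.1), ?_⟩
      exact lt_of_le_of_ne (hwmin y hy.2) (fun h => hy.1 (fval_inj f h.symm))
    have hcount := count_high_of_high f hb w hwhigh (hWdeg w hwW)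
    have hcard := card_le_card hsub
    rw [card_erase_of_mem hwW1, hcount] at hcard
    omega
  · -- W0 nonempty
    have hW0ne : W0.Nonempty := nonempty_iff_ne_empty.mpr hW0e
    obtain ⟨w0, hw0⟩ := hW0ne
    have hw0W : w0 ∈ W := (mem_filter.mp hw0).1
    have hw0low : (f w0 : ℕ) < k + 1 := (mem_filter.mp hw0).2
    have hW1nbrs : ∀ w ∈ W0, W1 ⊆ univ.filter (fun z => G.Adj w z ∧ k + 1 ≤ (f z : ℕ)) := by
      intro w hw z hz
      have hwW : w ∈ W := (mem_filter.mp hw).1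
      have hwlow : (f w : ℕ) < k + 1 := (mem_filter.mp hw).2
      have hzW : z ∈ W := (mem_filter.mp hz).1
      have hzhigh := hniceW1 z hz
      have hzw : w ≠ z := by
        intro h
        rw [h] at hwlow
        omega
      simp only [mem_filter, mem_univ, true_and]
      exact ⟨hWadj w hwW z hzW hzw, hzhigh⟩
    have hbt : W1.card ≤ t := by
      have hcard := card_le_card (hW1nbrs w0 hw0)
      rw [count_high_of_low f h1 hkV w0 hw0low (hWdeg w0 hw0W)] at hcard
      exact hcard
    have hcount : ∀ w ∈ W0,
        (univ.filter (fun z => G.Adj w z ∧ k + 1 ≤ (f z : ℕ) ∧ z ∉ W1)).card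
          ≤ t - W1.card := by
      intro w hw
      have hwW : w ∈ W := (mem_filter.mp hw).1
      have hwlow : (f w : ℕ) < k + 1 := (mem_filter.mp hw).2
      have hT := count_high_of_low f h1 hkV w hwlow (hWdeg w hwW)
      have heq : univ.filter (fun z => G.Adj w z ∧ k + 1 ≤ (f z : ℕ) ∧ z ∉ W1)
          = (univ.filter (fun z => G.Adj w z ∧ k + 1 ≤ (f z : ℕ))) \ W1 := by
        ext z
        simp only [mem_filter, mem_univ, true_and, mem_sdiff]
        tauto
      rw [heq, card_sdiff_of_subset (hW1nbrs w hw), hT]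
    have hadjB : ∀ w ∈ W0, ∀ z ∈ W1, G.Adj w z := by
      intro w hw z hz
      have := hW1nbrs w hw hz
      simp only [mem_filter, mem_univ, true_and] at this
      exact this.1
    have hlows : ∀ w ∈ W0, (f w : ℕ) < k + 1 := fun w hw => (mem_filter.mp hw).2
    have hW1high : W1 ⊆ univ.filter (fun z : V => k + 1 ≤ (f z : ℕ)) := by
      intro z hz
      simp only [mem_filter, mem_univ, true_and]
      exact hniceW1 z hz
    have hHBeq : univ.filter (fun z : V => k + 1 ≤ (f z : ℕ) ∧ z ∉ W1)
        = (univ.filter (fun z : V => k + 1 ≤ (f z : ℕ))) \ W1 := by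
      ext z
      simp only [mem_filter, mem_univ, true_and, mem_sdiff]
    have hHB : (t - W1.card) + 1
        ≤ (univ.filter (fun z : V => k + 1 ≤ (f z : ℕ) ∧ z ∉ W1)).card := by
      rw [hHBeq, card_sdiff_of_subset hW1high, card_highs f hkV]
      omega
    have hKey := key_lemma f h1 hb hc (t - W1.card) W1 W0 hlows hadjB hcount hHB
    omega
end
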